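/- arXiv:2310.15668 — 8 statements merged into one kernel-verified Lean document; each statement's English description precedes it below -/
import Mathlib

section
/- Let E be a finite set with |E| ≥ 1 and let I_1, …, I_M be pairwise-distinct 3-element subsets of E. Let X_1, …, X_s (s ≥ 1) be independent random variables, each uniformly distributed on E, and define M̄ := (|E|/(3s)) · Σ_{i=1}^{s} Σ_{j=1}^{M} 1[X_i ∈ I_j]. For l ∈ {0,1,2}, let p_l be the number of ordered pairs (j, j') with j ≠ j' and |I_j ∩ I_{j'}| = l. Then Var[M̄] = (1/(3s)) · M · (|E| − 3) + (1/(9s)) · Σ_{l=0}^{2} p_l · (l·|E| − 9). (Theorem 2, variance of MoCHy-A.) -/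
open Finset

lemma card_ne_sub {ι : Type*} [Fintype ι] [DecidableEq ι] (i : ι) :
    Fintype.card {j : ι // j ≠ i} = Fintype.card ι - 1 := by
  simp [Fintype.card_subtype_compl, Fintype.card_subtype_eq]

lemma sum_eval {α : Type*} [Fintype α] {ι : Type*} [Fintype ι] [DecidableEq ι]
    (h : α → ℝ) (i : ι) :
    ∑ x : ι → α, h (x i)
      = (Fintype.card α : ℝ) ^ (Fintype.card ι - 1) * ∑ a : α, h a := by
  classical
  rw [← Equiv.sum_comp (Equiv.piSplitAt i (fun _ : ι => α)).symm
    (fun x : ι → α => h (x i))]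
  have key : ∀ y : α × ({j : ι // j ≠ i} → α),
      (Equiv.piSplitAt i (fun _ : ι => α)).symm y i = y.1 := by
    intro y; simp [Equiv.piSplitAt_symm_apply]
  simp only [key]
  rw [Fintype.sum_prod_type]
  simp only [Finset.sum_const, Finset.card_univ, nsmul_eq_mul,
    Fintype.card_fun, card_ne_sub]
  rw [Finset.mul_sum]
  push_cast
  ring

lemma sum_eval2 {α : Type*} [Fintype α] {ι : Type*} [Fintype ι] [DecidableEq ι]
    (h k : α → ℝ) {i i' : ι} (hne : i ≠ i') :
    ∑ x : ι → α, h (x i) * k (x i')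
      = (Fintype.card α : ℝ) ^ (Fintype.card ι - 2)
          * (∑ a : α, h a) * (∑ a : α, k a) := by
  classical
  rw [← Equiv.sum_comp (Equiv.piSplitAt i (fun _ : ι => α)).symm
    (fun x : ι → α => h (x i) * k (x i'))]
  have key : ∀ y : α × ({j : ι // j ≠ i} → α),
      (Equiv.piSplitAt i (fun _ : ι => α)).symm y i = y.1 := by
    intro y; simp [Equiv.piSplitAt_symm_apply]
  have key2 : ∀ y : α × ({j : ι // j ≠ i} → α),
      (Equiv.piSplitAt i (fun _ : ι => α)).symm y i' = y.2 ⟨i', hne.symm⟩ := by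
    intro y; simp [Equiv.piSplitAt_symm_apply, hne.symm]
  simp only [key, key2]
  rw [Fintype.sum_prod_type]
  have inner : ∀ a : α, ∑ y : {j : ι // j ≠ i} → α, h a * k (y ⟨i', hne.symm⟩)
      = h a * ((Fintype.card α : ℝ) ^ (Fintype.card ι - 2) * ∑ b : α, k b) := by
    intro a
    rw [← Finset.mul_sum, sum_eval k (⟨i', hne.symm⟩ : {j : ι // j ≠ i}), card_ne_sub]
    norm_num [Nat.sub_sub]
  simp only [inner]
  rw [← Finset.sum_mul]
  ring

/-- **Theorem 2 (variance of MoCHy-A).**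
`α` is the finite hyperedge set `E` (with `|E| ≥ 1`), `I 1, …, I M` are the
pairwise-distinct 3-element subsets of `E` (the instances of a fixed h-motif).
`est` is the estimator `M̄ = (|E|/(3s)) · Σᵢ Σⱼ 1[Xᵢ ∈ Iⱼ]`, where the `s ≥ 1`
i.i.d. uniform samples are encoded by the uniform distribution on `Fin s → α`;
`μ = E[M̄]` and `p l` is the number of ordered pairs `(j, j')` with `j ≠ j'`
and `|Iⱼ ∩ Iⱼ'| = l`.  Then
`Var[M̄] = (1/(3s))·M·(|E| − 3) + (1/(9s))·Σ_{l=0}^{2} p_l·(l·|E| − 9)`. -/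
theorem mochyA_variance {α : Type*} [Fintype α] [DecidableEq α] [Nonempty α]
    {M s : ℕ} (hs : 1 ≤ s) (I : Fin M → Finset α)
    (hcard : ∀ j, (I j).card = 3) (hdist : Function.Injective I)
    (est : (Fin s → α) → ℝ)
    (hest : ∀ x, est x = ((Fintype.card α : ℝ) / (3 * s)) *
        ∑ i : Fin s, ∑ j : Fin M, (if x i ∈ I j then (1 : ℝ) else 0))
    (μ : ℝ) (hμ : μ = (∑ x : Fin s → α, est x) / (Fintype.card α : ℝ) ^ s)
    (p : ℕ → ℕ)
    (hp : ∀ l, p l =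
      Nat.card {jj : Fin M × Fin M // jj.1 ≠ jj.2 ∧ (I jj.1 ∩ I jj.2).card = l}) :
    (∑ x : Fin s → α, (est x - μ) ^ 2) / (Fintype.card α : ℝ) ^ s
      = 1 / (3 * s) * M * ((Fintype.card α : ℝ) - 3)
        + 1 / (9 * s) *
            ∑ l ∈ Finset.range 3, (p l : ℝ) * (l * (Fintype.card α : ℝ) - 9) := by
  classical
  set n : ℝ := (Fintype.card α : ℝ) with hndef
  have hnpos : (0:ℝ) < n := by
    rw [hndef]; exact_mod_cast Fintype.card_pos
  have hn0 : n ≠ 0 := ne_of_gt hnpos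
  have hs0 : (s:ℝ) ≠ 0 := by positivity
  set G : α → ℝ := fun a => ∑ j : Fin M, if a ∈ I j then (1:ℝ) else 0 with hG
  set S1 : ℝ := ∑ a : α, G a with hS1def
  set S2 : ℝ := ∑ a : α, G a * G a with hS2def
  set Kc : ℝ := (((univ : Finset (Fin s)).offDiag.card : ℕ) : ℝ) with hKcdef
  -- estimator in terms of G
  have hestG : ∀ x : Fin s → α, est x = n / (3*s) * ∑ i : Fin s, G (x i) := by
    intro x; rw [hest x, hG]
  -- linear sum
  have hlin1 : ∀ i : Fin s, ∑ x : Fin s → α, G (x i) = n ^ (s-1) * S1 := by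
    intro i
    have := sum_eval G i
    simpa [Fintype.card_fin] using this
  have hsum_lin : ∑ x : Fin s → α, (∑ i : Fin s, G (x i)) = s * n ^ (s-1) * S1 := by
    rw [Finset.sum_comm]
    simp only [hlin1, Finset.sum_const, Finset.card_univ, Fintype.card_fin, nsmul_eq_mul]
    ring
  -- quadratic sum
  have hdiag : ∀ i : Fin s, ∑ x : Fin s → α, G (x i) * G (x i) = n ^ (s-1) * S2 := by
    intro i
    have := sum_eval (fun a => G a * G a) i
    simpa [Fintype.card_fin] using this
  have hsum_sq : ∑ x : Fin s → α, (∑ i : Fin s, G (x i))^2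
      = s * n^(s-1) * S2 + Kc * n^(s-2) * (S1 * S1) := by
    have step1 : ∀ x : Fin s → α, (∑ i : Fin s, G (x i))^2
        = ∑ q ∈ (univ : Finset (Fin s)) ×ˢ univ, G (x q.1) * G (x q.2) := by
      intro x
      rw [sq, Finset.sum_mul_sum]
      exact (Finset.sum_product univ univ (fun q => G (x q.1) * G (x q.2))).symm
    simp only [step1]
    rw [Finset.sum_comm, ← Finset.diag_union_offDiag (univ : Finset (Fin s)),
      Finset.sum_union (Finset.disjoint_diag_offDiag _), Finset.sum_diag]
    have hcongr : ∀ q ∈ (univ : Finset (Fin s)).offDiag,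
        (∑ x : Fin s → α, G (x q.1) * G (x q.2)) = n^(s-2) * S1 * S1 := by
      intro q hq
      rw [Finset.mem_offDiag] at hq
      have := sum_eval2 G G hq.2.2
      simpa [Fintype.card_fin] using this
    have off : ∑ q ∈ (univ : Finset (Fin s)).offDiag,
        (∑ x : Fin s → α, G (x q.1) * G (x q.2)) = Kc * n^(s-2) * (S1 * S1) := by
      rw [Finset.sum_congr rfl hcongr, Finset.sum_const, nsmul_eq_mul, ← hKcdef]
      ring
    rw [off]
    simp only [hdiag, Finset.sum_const, Finset.card_univ, Fintype.card_fin, nsmul_eq_mul]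
    ring
  -- values of S1 and S2
  have hS1val : S1 = 3 * M := by
    rw [hS1def, hG, Finset.sum_comm]
    have : ∀ j : Fin M, (∑ a : α, if a ∈ I j then (1:ℝ) else 0) = 3 := by
      intro j
      rw [Finset.sum_boole]
      simp [Finset.filter_univ_mem, hcard j]
    simp only [this, Finset.sum_const, Finset.card_univ, Fintype.card_fin, nsmul_eq_mul]
    ring
  set T : ℝ := ∑ l ∈ Finset.range 3, (l:ℝ) * (p l : ℝ) with hTdef
  have hinter : ∀ j j' : Fin M,
      (∑ a : α, (if a ∈ I j then (1:ℝ) else 0) * (if a ∈ I j' then (1:ℝ) else 0))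
        = ((I j ∩ I j').card : ℝ) := by
    intro j j'
    have : ∀ a : α, (if a ∈ I j then (1:ℝ) else 0) * (if a ∈ I j' then (1:ℝ) else 0)
        = if a ∈ I j ∩ I j' then (1:ℝ) else 0 := by
      intro a
      by_cases h1 : a ∈ I j <;> by_cases h2 : a ∈ I j' <;>
        simp [h1, h2, Finset.mem_inter]
    simp only [this, Finset.sum_boole, Finset.filter_univ_mem]
  have hmaps : ∀ q ∈ (univ : Finset (Fin M)).offDiag,
      (I q.1 ∩ I q.2).card ∈ Finset.range 3 := by
    intro q hq
    rw [Finset.mem_offDiag] at hq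
    rw [Finset.mem_range]
    by_contra hle
    push_neg at hle
    have h1 : I q.1 ∩ I q.2 = I q.1 :=
      (Finset.eq_of_subset_of_card_le Finset.inter_subset_left
        ((hcard q.1).le.trans hle))
    have h2 : I q.1 ⊆ I q.2 := Finset.inter_eq_left.mp h1
    have h3 : I q.1 = I q.2 :=
      Finset.eq_of_subset_of_card_le h2
        (le_of_eq ((hcard q.2).trans (hcard q.1).symm))
    exact hq.2.2 (hdist h3)
  have hfibcard : ∀ l, (((univ : Finset (Fin M)).offDiag.filter
      (fun q => (I q.1 ∩ I q.2).card = l)).card) = p l := by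
    intro l
    rw [hp l, Nat.card_eq_fintype_card, Fintype.card_subtype]
    congr 1
    ext q
    simp only [Finset.mem_filter, Finset.mem_offDiag, Finset.mem_univ, true_and]
  have hoff2 : ∑ q ∈ (univ : Finset (Fin M)).offDiag, ((I q.1 ∩ I q.2).card : ℝ) = T := by
    rw [← Finset.sum_fiberwise_of_maps_to hmaps (fun q => ((I q.1 ∩ I q.2).card : ℝ)),
      hTdef]
    apply Finset.sum_congr rfl
    intro l _
    have hc : ∀ q ∈ (univ : Finset (Fin M)).offDiag.filter
        (fun q => (I q.1 ∩ I q.2).card = l), ((I q.1 ∩ I q.2).card : ℝ) = (l:ℝ) := by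
      intro q hq
      rw [Finset.mem_filter] at hq
      rw [hq.2]
    rw [Finset.sum_congr rfl hc, Finset.sum_const, hfibcard, nsmul_eq_mul]
    ring
  have hS2val : S2 = 3 * M + T := by
    have expand : S2 = ∑ q ∈ (univ : Finset (Fin M)) ×ˢ univ,
        ((I q.1 ∩ I q.2).card : ℝ) := by
      rw [hS2def]
      have : ∀ a : α, G a * G a = ∑ q ∈ (univ : Finset (Fin M)) ×ˢ univ,
          (if a ∈ I q.1 then (1:ℝ) else 0) * (if a ∈ I q.2 then (1:ℝ) else 0) := by
        intro a
        rw [hG, Finset.sum_mul_sum]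
        exact (Finset.sum_product univ univ
          (fun q => (if a ∈ I q.1 then (1:ℝ) else 0) * (if a ∈ I q.2 then (1:ℝ) else 0))).symm
      simp only [this]
      rw [Finset.sum_comm]
      exact Finset.sum_congr rfl fun q _ => hinter q.1 q.2
    rw [expand, ← Finset.diag_union_offDiag (univ : Finset (Fin M)),
      Finset.sum_union (Finset.disjoint_diag_offDiag _), Finset.sum_diag, hoff2]
    have : ∀ j : Fin M, ((I j ∩ I j).card : ℝ) = 3 := by
      intro j; rw [Finset.inter_self, hcard]; norm_num
    simp only [this, Finset.sum_const, Finset.card_univ, Fintype.card_fin, nsmul_eq_mul]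
    ring
  have hPsum : ∑ l ∈ Finset.range 3, (p l : ℝ) = (M:ℝ)*M - M := by
    have h1 : ∑ l ∈ Finset.range 3, (p l : ℝ)
        = (((univ : Finset (Fin M)).offDiag.card : ℕ) : ℝ) := by
      have hc : ∀ l ∈ Finset.range 3, (∑ _q ∈ (univ : Finset (Fin M)).offDiag.filter
          (fun q => (I q.1 ∩ I q.2).card = l), (1:ℝ)) = (p l : ℝ) := by
        intro l _
        rw [Finset.sum_const, hfibcard, nsmul_eq_mul, mul_one]
      rw [Finset.sum_congr rfl (fun l hl => (hc l hl).symm),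
        Finset.sum_fiberwise_of_maps_to hmaps (fun _ => (1:ℝ)),
        Finset.sum_const, nsmul_eq_mul, mul_one]
    rw [h1, Finset.offDiag_card, Finset.card_univ, Fintype.card_fin]
    have hMle : M ≤ M * M := by nlinarith [Nat.zero_le M]
    push_cast [Nat.cast_sub hMle]
    ring
  -- expectation and variance expansion
  have hcardfun : ((Fintype.card (Fin s → α) : ℕ) : ℝ) = n ^ s := by
    rw [Fintype.card_fun, Fintype.card_fin]
    push_cast
    ring
  have hEsum : ∑ x : Fin s → α, est x = n/(3*s) * (s * n^(s-1) * S1) := by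
    simp only [hestG]
    rw [← Finset.mul_sum, hsum_lin]
  have hE2 : ∑ x : Fin s → α, est x ^ 2
      = (n/(3*s))^2 * (s * n^(s-1) * S2 + Kc * n^(s-2) * (S1 * S1)) := by
    simp only [hestG, mul_pow]
    rw [← Finset.mul_sum, hsum_sq]
  have hexp : ∑ x : Fin s → α, (est x - μ)^2
      = (∑ x : Fin s → α, est x ^ 2) - 2*μ*(∑ x : Fin s → α, est x) + n^s * μ^2 := by
    have step : ∑ x : Fin s → α, (est x - μ)^2
        = ∑ x : Fin s → α, (est x ^2 - 2*μ*est x + μ^2) := by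
      apply Finset.sum_congr rfl; intros; ring
    rw [step, Finset.sum_add_distrib, Finset.sum_sub_distrib, ← Finset.mul_sum,
      Finset.sum_const, Finset.card_univ, nsmul_eq_mul, hcardfun]
  -- power identities
  have hNpow : n^s = n * n^(s-1) := by
    conv_lhs => rw [← Nat.sub_add_cancel hs]
    rw [pow_succ]; ring
  have hpow_ne : n^(s-1) ≠ 0 := pow_ne_zero _ hn0
  have hKq : Kc * n^(s-2) * (n*n) = ((s:ℝ)*s - s) * n^s := by
    match s, hs with
    | 1, _ =>
      have : Kc = 0 := by
        rw [hKcdef, Finset.offDiag_card, Finset.card_univ, Fintype.card_fin]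
        norm_num
      rw [this]; push_cast; ring
    | (m+2), _ =>
      rw [hKcdef, Finset.offDiag_card, Finset.card_univ, Fintype.card_fin]
      have hle : m+2 ≤ (m+2)*(m+2) := by nlinarith [Nat.zero_le m]
      push_cast [Nat.cast_sub hle]
      rw [pow_succ, pow_succ]
      ring
  have hKy : Kc * n^(s-2) = ((s:ℝ)*s - s) * n^(s-1) / n := by
    rw [eq_div_iff hn0]
    apply mul_right_cancel₀ hn0
    rw [hNpow] at hKq
    linear_combination hKq
  have hμval : μ = S1 / 3 := by
    rw [hμ, hEsum, hNpow]
    field_simp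
  have key : (∑ x : Fin s → α, (est x - μ)^2) / n^s = (n * S2 - S1^2)/(9*s) := by
    rw [hexp, hE2, hEsum, hμval, hKy, hNpow]
    field_simp
    ring
  rw [key, hS1val, hS2val]
  have hrhs : ∑ l ∈ Finset.range 3, (p l:ℝ)*((l:ℝ)*n - 9)
      = n * T - 9 * ((M:ℝ)*M - M) := by
    rw [← hPsum, hTdef, Finset.mul_sum, Finset.mul_sum, ← Finset.sum_sub_distrib]
    apply Finset.sum_congr rfl
    intros; ring
  rw [hrhs]
  field_simp
  ring
end

section
/- Let E be a finite set with |E| ≥ 1 and let I_1, …, I_M be pairwise-distinct 3-element subsets of E with M ≥ 1. Suppose every element of E belongs to at most D of the sets I_1, …, I_M (D ≥ 1). Let X_1, …, X_s be independent uniform samples from E and M̄ := (|E|/(3s)) · Σ_{i=1}^{s} Σ_{j=1}^{M} 1[X_i ∈ I_j]. Then for any ε, δ > 0, if s > (1/(18ε²)) · (|E|·D/M)² · log(2/δ), then Pr(|M̄ − M| ≥ M·ε) ≤ δ. (Theorem 4, concentration bound of MoCHy-A; the paper instantiates D = d_max[t]², where d_max[t] is the maximum number of adjacent hyperedges over all hyperedges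 occurring in instances of h-motif t.) -/
open scoped Classical

open Real


lemma hoeffding_scalar (p : ℝ) (hp0 : 0 ≤ p) (hp1 : p ≤ 1) (t : ℝ) :
    p * exp ((1 - p) * t) + (1 - p) * exp (-p * t) ≤ exp (t ^ 2 / 8) := by
  set q : ℝ := 1 - p with hq
  clear_value q
  have hq0 : 0 ≤ q := by simp only [hq]; linarith
  have hpos : ∀ u : ℝ, 0 < p * exp u + q := by
    intro u
    rcases eq_or_lt_of_le hp0 with h | h
    · simp [← h, hq]
    · have := exp_pos u
      nlinarith
  set g : ℝ → ℝ := fun u => log (p * exp u + q) - u * p with hgdef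
  set g' : ℝ → ℝ := fun u => p * exp u / (p * exp u + q) - p with hg'def
  have hg : ∀ u, HasDerivAt g (g' u) u := by
    intro u
    have h1 : HasDerivAt (fun u : ℝ => p * exp u + q) (p * exp u) u :=
      ((Real.hasDerivAt_exp u).const_mul p).add_const q
    have h2 := h1.log (hpos u).ne'
    exact h2.sub (hasDerivAt_mul_const p)
  have hg' : ∀ u, HasDerivAt g' (p * exp u * q / (p * exp u + q) ^ 2) u := by
    intro u
    have h1 : HasDerivAt (fun u : ℝ => p * exp u) (p * exp u) u :=
      (Real.hasDerivAt_exp u).const_mul p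
    have h2 : HasDerivAt (fun u : ℝ => p * exp u + q) (p * exp u) u :=
      h1.add_const q
    have h4 := (h1.div h2 (hpos u).ne').sub_const p
    refine h4.congr_deriv ?_
    congr 1
    ring
  set k' : ℝ → ℝ := fun u => u / 4 - g' u with hk'def
  have hk' : ∀ u, HasDerivAt k' (1 / 4 - p * exp u * q / (p * exp u + q) ^ 2) u := by
    intro u
    have h1 : HasDerivAt (fun u : ℝ => u / 4) (1 / 4) u := by
      simpa using (hasDerivAt_id u).div_const 4
    exact h1.sub (hg' u)
  have hk'nonneg : ∀ u, 0 ≤ 1 / 4 - p * exp u * q / (p * exp u + q) ^ 2 := by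
    intro u
    rw [sub_nonneg, div_le_iff₀ (pow_pos (hpos u) 2)]
    have hid : (p * exp u + q) ^ 2 = 4 * (p * exp u * q) + (p * exp u - q) ^ 2 := by ring
    linarith [sq_nonneg (p * exp u - q)]
  have hk'mono : Monotone k' := by
    apply monotone_of_deriv_nonneg
    · exact fun u => (hk' u).differentiableAt
    · intro u
      rw [(hk' u).deriv]
      exact hk'nonneg u
  have hone : p * Real.exp 0 + q = 1 := by rw [Real.exp_zero, hq]; ring
  have hk'0 : k' 0 = 0 := by
    simp only [hk'def, hg'def, hone]
    simp
  set k : ℝ → ℝ := fun u => u ^ 2 / 8 - g u with hkdef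
  have hk : ∀ u, HasDerivAt k (k' u) u := by
    intro u
    have h1 : HasDerivAt (fun u : ℝ => u ^ 2 / 8) (u / 4) u := by
      have := (hasDerivAt_pow 2 u).div_const 8
      refine this.congr_deriv ?_
      ring
    exact h1.sub (hg u)
  have hk0 : k 0 = 0 := by
    simp only [hkdef, hgdef, hone]
    simp
  have hkdiff : Differentiable ℝ k := fun u => (hk u).differentiableAt
  have hknonneg : ∀ u, 0 ≤ k u := by
    intro u
    rcases le_total 0 u with h | h
    · have hmono : MonotoneOn k (Set.Ici 0) := by
        apply monotoneOn_of_deriv_nonneg (convex_Ici 0) hkdiff.continuous.continuousOn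
        · intro x _
          exact (hkdiff x).differentiableWithinAt
        · intro x hx
          rw [interior_Ici] at hx
          rw [(hk x).deriv]
          calc (0:ℝ) = k' 0 := hk'0.symm
            _ ≤ k' x := hk'mono (le_of_lt hx)
      have := hmono (Set.mem_Ici.mpr le_rfl) (Set.mem_Ici.mpr h) h
      linarith [hk0 ▸ this]
    · have hanti : AntitoneOn k (Set.Iic 0) := by
        apply antitoneOn_of_deriv_nonpos (convex_Iic 0) hkdiff.continuous.continuousOn
        · intro x _
          exact (hkdiff x).differentiableWithinAt
        · intro x hx
          rw [interior_Iic] at hx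
          rw [(hk x).deriv]
          calc k' x ≤ k' 0 := hk'mono (le_of_lt hx)
            _ = 0 := hk'0
      have := hanti (Set.mem_Iic.mpr h) (Set.mem_Iic.mpr le_rfl) h
      linarith [hk0 ▸ this]
  have hgle : g t ≤ t ^ 2 / 8 := by
    have := hknonneg t
    simp only [hkdef] at this
    linarith
  have hlhs : p * exp (q * t) + q * exp (-p * t) = exp (g t) := by
    simp only [hgdef]
    rw [Real.exp_sub, Real.exp_log (hpos t)]
    rw [eq_div_iff (exp_ne_zero _)]
    have e1 : exp (q * t) * exp (t * p) = exp t := by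
      rw [← Real.exp_add]
      have : q * t + t * p = t := by rw [hq]; ring
      rw [this]
    have e2 : exp (-p * t) * exp (t * p) = 1 := by
      rw [← Real.exp_add]
      have : -p * t + t * p = 0 := by ring
      rw [this, Real.exp_zero]
    calc (p * exp (q*t) + q * exp (-p*t)) * exp (t*p)
        = p * (exp (q*t) * exp (t*p)) + q * (exp (-p*t) * exp (t*p)) := by ring
      _ = p * exp t + q := by rw [e1, e2, mul_one]
  rw [hlhs]
  exact Real.exp_le_exp.mpr hgle



lemma mgf_bound {α : Type*} [Fintype α] [Nonempty α] (f : α → ℝ) (Dr : ℝ)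
    (hDr : 0 < Dr) (hf0 : ∀ a, 0 ≤ f a) (hfD : ∀ a, f a ≤ Dr) (lam : ℝ)
    (μ : ℝ) (hμ : μ = (∑ a, f a) / Fintype.card α) :
    ∑ a, exp (lam * (f a - μ)) ≤ (Fintype.card α : ℝ) * exp (lam ^ 2 * Dr ^ 2 / 8) := by
  set n : ℝ := (Fintype.card α : ℝ) with hn
  have hnpos : (0:ℝ) < n := by
    simp only [hn]
    exact_mod_cast Fintype.card_pos
  -- pointwise convexity bound
  have conv : ∀ a, exp (lam * f a) ≤ (1 - f a / Dr) + (f a / Dr) * exp (lam * Dr) := by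
    intro a
    have h1 : 0 ≤ f a / Dr := div_nonneg (hf0 a) hDr.le
    have h2 : f a / Dr ≤ 1 := (div_le_one hDr).mpr (hfD a)
    have := convexOn_exp.2 (Set.mem_univ (0:ℝ)) (Set.mem_univ (lam * Dr))
      (by linarith : (0:ℝ) ≤ 1 - f a / Dr) h1 (by ring)
    simp only [smul_eq_mul, mul_zero, zero_add, Real.exp_zero, mul_one] at this
    have harg : f a / Dr * (lam * Dr) = lam * f a := by
      field_simp
    rw [harg] at this
    linarith
  have hSum : ∑ a, f a = n * μ := by
    rw [hμ]; field_simp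
  set p : ℝ := μ / Dr with hp
  have hμ0 : 0 ≤ μ := by
    rw [hμ]
    apply div_nonneg _ hnpos.le
    exact Finset.sum_nonneg fun a _ => hf0 a
  have hμD : μ ≤ Dr := by
    rw [hμ, div_le_iff₀ hnpos]
    calc ∑ a, f a ≤ ∑ _a : α, Dr := Finset.sum_le_sum fun a _ => hfD a
      _ = n * Dr := by rw [Finset.sum_const, nsmul_eq_mul]; rfl
      _ = Dr * n := by ring
  have hp0 : 0 ≤ p := div_nonneg hμ0 hDr.le
  have hp1 : p ≤ 1 := (div_le_one hDr).mpr hμD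
  have step1 : ∑ a, exp (lam * f a) ≤ n * ((1 - p) + p * exp (lam * Dr)) := by
    calc ∑ a, exp (lam * f a) ≤ ∑ a, ((1 - f a / Dr) + (f a / Dr) * exp (lam * Dr)) :=
          Finset.sum_le_sum fun a _ => conv a
      _ = n - (∑ a, f a) / Dr + ((∑ a, f a) / Dr) * exp (lam * Dr) := by
          rw [Finset.sum_add_distrib, Finset.sum_sub_distrib, Finset.sum_const,
            ← Finset.sum_div, ← Finset.sum_mul, ← Finset.sum_div]
          simp [hn]
      _ = n * ((1 - p) + p * exp (lam * Dr)) := by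
          rw [hSum, hp]
          field_simp
  have key : ∑ a, exp (lam * (f a - μ)) = exp (-(lam * μ)) * ∑ a, exp (lam * f a) := by
    rw [Finset.mul_sum]
    apply Finset.sum_congr rfl
    intro a _
    rw [← Real.exp_add]
    ring_nf
  rw [key]
  have hμp : μ = p * Dr := by rw [hp]; field_simp
  set t : ℝ := lam * Dr with ht
  have main : exp (-(lam * μ)) * ((1 - p) + p * exp t) ≤ exp (t ^ 2 / 8) := by
    have expand : exp (-(lam * μ)) * ((1 - p) + p * exp t)
        = p * exp ((1 - p) * t) + (1 - p) * exp (-p * t) := by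
      have e1 : exp (-(lam * μ)) = exp (-p * t) := by
        rw [hμp, ht]; ring_nf
      have e2 : exp (-p * t) * exp t = exp ((1 - p) * t) := by
        rw [← Real.exp_add]; ring_nf
      rw [e1, ← e2]
      ring
    rw [expand]
    exact hoeffding_scalar p hp0 hp1 t
  calc exp (-(lam * μ)) * ∑ a, exp (lam * f a)
      ≤ exp (-(lam * μ)) * (n * ((1 - p) + p * exp (lam * Dr))) := by
        apply mul_le_mul_of_nonneg_left step1 (exp_pos _).le
    _ = n * (exp (-(lam * μ)) * ((1 - p) + p * exp t)) := by rw [ht]; ring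
    _ ≤ n * exp (t ^ 2 / 8) := by
        apply mul_le_mul_of_nonneg_left main hnpos.le
    _ = n * exp (lam ^ 2 * Dr ^ 2 / 8) := by
        rw [ht]; ring_nf



lemma tail_count {α : Type*} [Fintype α] [Nonempty α] (f : α → ℝ) (Dr : ℝ)
    (hDr : 0 < Dr) (hf0 : ∀ a, 0 ≤ f a) (hfD : ∀ a, f a ≤ Dr)
    (μ : ℝ) (hμ : μ = (∑ a, f a) / Fintype.card α)
    (s : ℕ) (hs : 0 < s) (t : ℝ) (ht : 0 < t) (σ : ℝ) (hσ : σ = 1 ∨ σ = -1) :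
    ((Finset.univ.filter fun x : Fin s → α =>
        t ≤ σ * ((∑ i, f (x i)) - s * μ)).card : ℝ)
      ≤ (Fintype.card α : ℝ) ^ s * Real.exp (-2 * t ^ 2 / (s * Dr ^ 2)) := by
  set n : ℝ := (Fintype.card α : ℝ) with hn
  have hnpos : (0:ℝ) < n := by
    simp only [hn]; exact_mod_cast Fintype.card_pos
  have hspos : (0:ℝ) < (s:ℝ) := by exact_mod_cast hs
  set lam : ℝ := 4 * t / (s * Dr ^ 2) with hlam
  have hlampos : 0 < lam := by
    apply div_pos (by linarith) (by positivity)
  have hσsq : σ ^ 2 = 1 := by rcases hσ with h | h <;> rw [h] <;> norm_num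
  -- step 1 : Markov
  have step1 : ((Finset.univ.filter fun x : Fin s → α =>
      t ≤ σ * ((∑ i, f (x i)) - s * μ)).card : ℝ) * exp (lam * t)
      ≤ ∑ x : Fin s → α, exp (lam * σ * ((∑ i, f (x i)) - s * μ)) := by
    rw [← nsmul_eq_mul, ← Finset.sum_const]
    calc ∑ _x ∈ (Finset.univ.filter fun x : Fin s → α =>
          t ≤ σ * ((∑ i, f (x i)) - s * μ)), exp (lam * t)
        ≤ ∑ x ∈ (Finset.univ.filter fun x : Fin s → α =>
          t ≤ σ * ((∑ i, f (x i)) - s * μ)),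
            exp (lam * σ * ((∑ i, f (x i)) - s * μ)) := by
          apply Finset.sum_le_sum
          intro x hx
          rw [Finset.mem_filter] at hx
          apply Real.exp_le_exp.mpr
          calc lam * t ≤ lam * (σ * ((∑ i, f (x i)) - s * μ)) :=
                mul_le_mul_of_nonneg_left hx.2 hlampos.le
            _ = lam * σ * ((∑ i, f (x i)) - s * μ) := by ring
      _ ≤ ∑ x : Fin s → α, exp (lam * σ * ((∑ i, f (x i)) - s * μ)) := by
          apply Finset.sum_le_sum_of_subset_of_nonneg (Finset.filter_subset _ _)
          intro x _ _
          exact (exp_pos _).le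
  -- step 2 : factorization
  have step2 : ∑ x : Fin s → α, exp (lam * σ * ((∑ i, f (x i)) - s * μ))
      = (∑ a, exp (lam * σ * (f a - μ))) ^ s := by
    rw [Finset.sum_pow']
    rw [Fintype.piFinset_univ]
    apply Finset.sum_congr rfl
    intro x _
    rw [← Real.exp_sum]
    congr 1
    rw [← Finset.mul_sum, Finset.sum_sub_distrib, Finset.sum_const, Finset.card_univ,
      Fintype.card_fin, nsmul_eq_mul]
  -- step 3 : mgf bound
  have step3 : (∑ a, exp (lam * σ * (f a - μ))) ^ s
      ≤ (n * exp (lam ^ 2 * Dr ^ 2 / 8)) ^ s := by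
    apply pow_le_pow_left₀ (Finset.sum_nonneg fun a _ => (exp_pos _).le)
    have := mgf_bound f Dr hDr hf0 hfD (lam * σ) μ hμ
    calc ∑ a, exp (lam * σ * (f a - μ)) ≤ n * exp ((lam * σ) ^ 2 * Dr ^ 2 / 8) := this
      _ = n * exp (lam ^ 2 * Dr ^ 2 / 8) := by
          congr 2
          rw [mul_pow, hσsq]
          ring
  have total : ((Finset.univ.filter fun x : Fin s → α =>
      t ≤ σ * ((∑ i, f (x i)) - s * μ)).card : ℝ) * exp (lam * t)
      ≤ n ^ s * exp ((s:ℝ) * (lam ^ 2 * Dr ^ 2 / 8)) := by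
    calc _ ≤ ∑ x : Fin s → α, exp (lam * σ * ((∑ i, f (x i)) - s * μ)) := step1
      _ = (∑ a, exp (lam * σ * (f a - μ))) ^ s := step2
      _ ≤ (n * exp (lam ^ 2 * Dr ^ 2 / 8)) ^ s := step3
      _ = n ^ s * exp ((s:ℝ) * (lam ^ 2 * Dr ^ 2 / 8)) := by
          rw [mul_pow, ← Real.exp_nat_mul]
  have hexp : (s:ℝ) * (lam ^ 2 * Dr ^ 2 / 8) - lam * t = -2 * t ^ 2 / (s * Dr ^ 2) := by
    rw [hlam]
    field_simp
    ring
  calc ((Finset.univ.filter fun x : Fin s → α =>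
        t ≤ σ * ((∑ i, f (x i)) - s * μ)).card : ℝ)
      = (((Finset.univ.filter fun x : Fin s → α =>
        t ≤ σ * ((∑ i, f (x i)) - s * μ)).card : ℝ) * exp (lam * t)) * exp (-(lam * t)) := by
        rw [mul_assoc, ← Real.exp_add]
        simp
    _ ≤ (n ^ s * exp ((s:ℝ) * (lam ^ 2 * Dr ^ 2 / 8))) * exp (-(lam * t)) := by
        apply mul_le_mul_of_nonneg_right total (exp_pos _).le
    _ = n ^ s * exp ((s:ℝ) * (lam ^ 2 * Dr ^ 2 / 8) - lam * t) := by
        rw [mul_assoc, ← Real.exp_add]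
        ring_nf
    _ = n ^ s * exp (-2 * t ^ 2 / (s * Dr ^ 2)) := by rw [hexp]

/-- **Theorem 4 (concentration bound of MoCHy-A).**
`α` is the finite hyperedge set `E` (with `|E| ≥ 1`), `I 1, …, I M` (`M ≥ 1`)
are pairwise-distinct 3-element subsets of `E`, and every element of `E`
belongs to at most `D ≥ 1` of them.  The `s` i.i.d. uniform samples are
encoded by the uniform distribution on `Fin s → α`, and the probability of the
deviation event is the number of sample vectors realizing it divided by
`|E|^s`.  If `s > (1/(18ε²)) · (|E|·D/M)² · log(2/δ)`, then
`Pr(|M̄ − M| ≥ M·ε) ≤ δ`. -/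
theorem mochyA_concentration {α : Type*} [Fintype α] [DecidableEq α] [Nonempty α]
    {M s D : ℕ} (hM : 1 ≤ M) (hD : 1 ≤ D)
    (I : Fin M → Finset α)
    (hcard : ∀ j, (I j).card = 3) (hdist : Function.Injective I)
    (hdeg : ∀ a : α, (Finset.univ.filter fun j => a ∈ I j).card ≤ D)
    (ε δ : ℝ) (hε : 0 < ε) (hδ : 0 < δ)
    (hs : (s : ℝ) >
      1 / (18 * ε ^ 2) * ((Fintype.card α : ℝ) * D / M) ^ 2 * Real.log (2 / δ)) :
    ((Finset.univ.filter fun x : Fin s → α =>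
        |((Fintype.card α : ℝ) / (3 * s)) *
            (∑ i : Fin s, ∑ j : Fin M, if x i ∈ I j then (1 : ℝ) else 0) - M|
          ≥ M * ε).card : ℝ)
      / (Fintype.card α : ℝ) ^ s ≤ δ := by
  have hnpos : (0:ℝ) < (Fintype.card α : ℝ) := by exact_mod_cast Fintype.card_pos
  have hMpos : (0:ℝ) < (M:ℝ) := by exact_mod_cast hM
  have hDpos : (0:ℝ) < (D:ℝ) := by exact_mod_cast hD
  set n : ℝ := (Fintype.card α : ℝ) with hn
  by_cases hs0 : s = 0
  · -- degenerate case : the hypothesis forces δ > 2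
    subst hs0
    have hCpos : 0 < 1 / (18 * ε ^ 2) * (n * D / M) ^ 2 := by positivity
    have hlogneg : Real.log (2 / δ) < 0 := by
      by_contra h
      push_neg at h
      have : 0 ≤ 1 / (18 * ε ^ 2) * (n * D / M) ^ 2 * Real.log (2 / δ) :=
        mul_nonneg hCpos.le h
      simp only [Nat.cast_zero] at hs
      linarith
    have h2δ : 2 < δ := by
      have := (Real.log_neg_iff (by positivity)).mp hlogneg
      rw [div_lt_one hδ] at this
      exact this
    have hcard1 : ((Finset.univ.filter fun x : Fin 0 → α =>
        |(n / (3 * (0:ℕ))) *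
            (∑ i : Fin 0, ∑ j : Fin M, if x i ∈ I j then (1 : ℝ) else 0) - M|
          ≥ M * ε).card : ℝ) ≤ 1 := by
      have h1 : (Finset.univ.filter fun x : Fin 0 → α =>
          |(n / (3 * (0:ℕ))) *
              (∑ i : Fin 0, ∑ j : Fin M, if x i ∈ I j then (1 : ℝ) else 0) - M|
            ≥ M * ε).card ≤ Fintype.card (Fin 0 → α) :=
        le_trans (Finset.card_filter_le _ _) (le_of_eq (Finset.card_univ))
      have h2 : Fintype.card (Fin 0 → α) = 1 := by simp
      calc ((Finset.univ.filter fun x : Fin 0 → α =>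
          |(n / (3 * (0:ℕ))) *
              (∑ i : Fin 0, ∑ j : Fin M, if x i ∈ I j then (1 : ℝ) else 0) - M|
            ≥ M * ε).card : ℝ) ≤ (Fintype.card (Fin 0 → α) : ℝ) := by exact_mod_cast h1
        _ = 1 := by exact_mod_cast h2
    rw [pow_zero, div_one]
    linarith [hcard1]
  · have hspos : 0 < s := Nat.pos_of_ne_zero hs0
    have hsR : (0:ℝ) < (s:ℝ) := by exact_mod_cast hspos
    -- the degree function
    set f : α → ℝ := fun a => ∑ j : Fin M, if a ∈ I j then (1:ℝ) else 0 with hf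
    have hf0 : ∀ a, 0 ≤ f a := by
      intro a
      apply Finset.sum_nonneg
      intro j _
      split <;> norm_num
    have hfD : ∀ a, f a ≤ (D:ℝ) := by
      intro a
      have h1 : f a = ((Finset.univ.filter fun j => a ∈ I j).card : ℝ) := by
        rw [hf]
        simp [Finset.sum_boole]
      rw [h1]
      exact_mod_cast hdeg a
    have hsumf : ∑ a, f a = 3 * M := by
      simp only [hf]
      rw [Finset.sum_comm]
      have h1 : ∀ j : Fin M, ∑ a, (if a ∈ I j then (1:ℝ) else 0) = 3 := by
        intro j
        rw [Finset.sum_ite_mem, Finset.univ_inter, Finset.sum_const, hcard j]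
        norm_num
      rw [Finset.sum_congr rfl fun j _ => h1 j, Finset.sum_const, Finset.card_univ,
        Fintype.card_fin, nsmul_eq_mul]
      ring
    set μ : ℝ := 3 * M / n with hμdef
    have hμ : μ = (∑ a, f a) / Fintype.card α := by rw [hμdef, hsumf, hn]
    set t : ℝ := 3 * s * M * ε / n with htdef
    have ht : 0 < t := by positivity
    -- inclusion of the deviation event into the two one-sided tails
    have hkey : ∀ x : Fin s → α,
        (n / (3 * s)) * (∑ i, f (x i)) - M = (n / (3 * s)) * ((∑ i, f (x i)) - s * μ) := by
      intro x
      rw [hμdef]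
      field_simp
    have hsub : (Finset.univ.filter fun x : Fin s → α =>
        |(n / (3 * s)) * (∑ i : Fin s, ∑ j : Fin M, if x i ∈ I j then (1 : ℝ) else 0) - M|
          ≥ M * ε) ⊆
        (Finset.univ.filter fun x : Fin s → α => t ≤ 1 * ((∑ i, f (x i)) - s * μ)) ∪
        (Finset.univ.filter fun x : Fin s → α => t ≤ (-1) * ((∑ i, f (x i)) - s * μ)) := by
      intro x hx
      rw [Finset.mem_filter] at hx
      have hx2 : M * ε ≤ |(n / (3 * s)) * (∑ i, f (x i)) - M| := hx.2
      rw [hkey x, abs_mul, abs_of_pos (by positivity : 0 < n / (3 * s))] at hx2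
      have habs : t ≤ |(∑ i, f (x i)) - s * μ| := by
        rw [htdef]
        rw [div_le_iff₀ hnpos]
        calc 3 * (s:ℝ) * M * ε = (M * ε) * (3 * s) := by ring
          _ ≤ (n / (3 * s) * |(∑ i, f (x i)) - s * μ|) * (3 * s) := by
              apply mul_le_mul_of_nonneg_right hx2 (by positivity)
          _ = |(∑ i, f (x i)) - s * μ| * n := by
              field_simp
      rw [le_abs] at habs
      rcases habs with h | h
      · apply Finset.mem_union_left
        rw [Finset.mem_filter]
        exact ⟨Finset.mem_univ _, by linarith⟩
      · apply Finset.mem_union_right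
        rw [Finset.mem_filter]
        exact ⟨Finset.mem_univ _, by linarith⟩
    have htail1 := tail_count f (D:ℝ) hDpos hf0 hfD μ hμ s hspos t ht 1 (Or.inl rfl)
    have htail2 := tail_count f (D:ℝ) hDpos hf0 hfD μ hμ s hspos t ht (-1) (Or.inr rfl)
    have hcard : ((Finset.univ.filter fun x : Fin s → α =>
        |(n / (3 * s)) * (∑ i : Fin s, ∑ j : Fin M, if x i ∈ I j then (1 : ℝ) else 0) - M|
          ≥ M * ε).card : ℝ) ≤ 2 * (n ^ s * Real.exp (-2 * t ^ 2 / (s * (D:ℝ) ^ 2))) := by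
      have h1 := Finset.card_le_card hsub
      have h2 := Finset.card_union_le
        (Finset.univ.filter fun x : Fin s → α => t ≤ 1 * ((∑ i, f (x i)) - s * μ))
        (Finset.univ.filter fun x : Fin s → α => t ≤ (-1) * ((∑ i, f (x i)) - s * μ))
      have h3 : ((Finset.univ.filter fun x : Fin s → α =>
          |(n / (3 * s)) * (∑ i : Fin s, ∑ j : Fin M, if x i ∈ I j then (1 : ℝ) else 0) - M|
            ≥ M * ε).card : ℝ) ≤
          ((Finset.univ.filter fun x : Fin s → α => t ≤ 1 * ((∑ i, f (x i)) - s * μ)).card : ℝ)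
          + ((Finset.univ.filter fun x : Fin s → α =>
              t ≤ (-1) * ((∑ i, f (x i)) - s * μ)).card : ℝ) := by
        exact_mod_cast le_trans h1 h2
      calc _ ≤ _ := h3
        _ ≤ n ^ s * Real.exp (-2 * t ^ 2 / (s * (D:ℝ) ^ 2))
            + n ^ s * Real.exp (-2 * t ^ 2 / (s * (D:ℝ) ^ 2)) := add_le_add htail1 htail2
        _ = 2 * (n ^ s * Real.exp (-2 * t ^ 2 / (s * (D:ℝ) ^ 2))) := by ring
    -- the exponent computation
    have hexp : -2 * t ^ 2 / (s * (D:ℝ) ^ 2) = -(18 * s * M ^ 2 * ε ^ 2 / (n ^ 2 * D ^ 2)) := by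
      rw [htdef]
      field_simp
      ring
    have hlogkey : Real.log (2 / δ) < 18 * s * M ^ 2 * ε ^ 2 / (n ^ 2 * D ^ 2) := by
      have hc : (0:ℝ) < 18 * ε ^ 2 * M ^ 2 / (n ^ 2 * D ^ 2) := by positivity
      have h1 : (1 / (18 * ε ^ 2) * (n * D / M) ^ 2 * Real.log (2 / δ))
          * (18 * ε ^ 2 * M ^ 2 / (n ^ 2 * D ^ 2)) = Real.log (2 / δ) := by
        field_simp
      have h2 := mul_lt_mul_of_pos_right hs hc
      rw [h1] at h2
      calc Real.log (2 / δ) < (s:ℝ) * (18 * ε ^ 2 * M ^ 2 / (n ^ 2 * D ^ 2)) := h2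
        _ = 18 * s * M ^ 2 * ε ^ 2 / (n ^ 2 * D ^ 2) := by ring
    have hexple : Real.exp (-2 * t ^ 2 / (s * (D:ℝ) ^ 2)) < δ / 2 := by
      rw [hexp]
      calc Real.exp (-(18 * s * M ^ 2 * ε ^ 2 / (n ^ 2 * D ^ 2)))
          < Real.exp (-(Real.log (2 / δ))) := Real.exp_lt_exp.mpr (by linarith)
        _ = δ / 2 := by
            rw [Real.exp_neg, Real.exp_log (by positivity : (0:ℝ) < 2 / δ), inv_div]
    rw [div_le_iff₀ (by positivity : (0:ℝ) < n ^ s)]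
    calc ((Finset.univ.filter fun x : Fin s → α =>
        |(n / (3 * s)) * (∑ i : Fin s, ∑ j : Fin M, if x i ∈ I j then (1 : ℝ) else 0) - M|
          ≥ M * ε).card : ℝ)
        ≤ 2 * (n ^ s * Real.exp (-2 * t ^ 2 / (s * (D:ℝ) ^ 2))) := hcard
      _ ≤ 2 * (n ^ s * (δ / 2)) := by
          apply mul_le_mul_of_nonneg_left _ (by norm_num)
          apply mul_le_mul_of_nonneg_left hexple.le (by positivity)
      _ = δ * n ^ s := by ring
end

section
/- Let Λ be a finite set with |Λ| ≥ 1 and let J_1, …, J_M be 3-element subsets of Λ such that any two distinct sets J_j, J_{j'} share at most one element (as holds for the hyperwedge sets of distinct closed h-motif instances). Let Y_1, …, Y_r (r ≥ 1) be independent uniform random samples from Λ and define M̂ := (|Λ|/(3r)) · Σ_{i=1}^{r} Σ_{j=1}^{M} 1[Y_i ∈ J_j]. For n ∈ {0,1}, let q_n be the number of ordered pairs (j, j') with j ≠ j' and |J_j ∩ J_{j'}| = n. Then Var[M̂] = (1/(3r)) · M · (|Λ| − 3) + (1/(9r)) · Σ_{n=0}^{1} q_n · (n·|Λ| − 9). (Theorem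 5, variance of MoCHy-A⁺ for closed h-motifs.) -/
open Finset

lemma aux_card_ne {ι : Type*} [Fintype ι] [DecidableEq ι] (i : ι) :
    Fintype.card {j : ι // j ≠ i} + 1 = Fintype.card ι := by
  have h1 : Fintype.card {j : ι // j ≠ i} = Fintype.card ι - Fintype.card {j : ι // j = i} :=
    Fintype.card_subtype_compl _
  rw [h1, Fintype.card_subtype_eq]
  have : 1 ≤ Fintype.card ι := Fintype.card_pos_iff.mpr ⟨i⟩
  omega

lemma aux_sum_one {β : Type*} [Fintype β] {ι : Type*} [Fintype ι] [DecidableEq ι]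
    (i : ι) (f : β → ℝ) :
    (Fintype.card β : ℝ) * ∑ y : ι → β, f (y i)
      = (Fintype.card β : ℝ) ^ Fintype.card ι * ∑ b : β, f b := by
  have h : ∑ y : ι → β, f (y i)
      = ∑ p : β × ({j : ι // j ≠ i} → β), f (((Equiv.funSplitAt i β).symm p) i) :=
    (Equiv.sum_comp (Equiv.funSplitAt i β).symm (fun y => f (y i))).symm
  simp only [Equiv.funSplitAt_symm_apply, dite_true] at h
  rw [h, Fintype.sum_prod_type]
  simp only [Finset.sum_const, nsmul_eq_mul, Finset.card_univ, Fintype.card_fun]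
  rw [← Finset.mul_sum, ← aux_card_ne i]
  push_cast
  ring

lemma aux_sum_two {β : Type*} [Fintype β] {ι : Type*} [Fintype ι] [DecidableEq ι]
    {i i' : ι} (hne : i' ≠ i) (f g : β → ℝ) :
    (Fintype.card β : ℝ) ^ 2 * ∑ y : ι → β, f (y i) * g (y i')
      = (Fintype.card β : ℝ) ^ Fintype.card ι * ((∑ b : β, f b) * ∑ b : β, g b) := by
  have h : ∑ y : ι → β, f (y i) * g (y i')
      = ∑ p : β × ({j : ι // j ≠ i} → β),
          f (((Equiv.funSplitAt i β).symm p) i) * g (((Equiv.funSplitAt i β).symm p) i') :=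
    (Equiv.sum_comp (Equiv.funSplitAt i β).symm (fun y => f (y i) * g (y i'))).symm
  simp only [Equiv.funSplitAt_symm_apply, dite_true, dif_neg hne] at h
  rw [h, Fintype.sum_prod_type]
  have h2 := aux_sum_one (β := β) (ι := {j : ι // j ≠ i}) ⟨i', hne⟩ g
  have hN : (Fintype.card β : ℝ) ^ 2 = (Fintype.card β : ℝ) * (Fintype.card β : ℝ) := sq _
  calc (Fintype.card β : ℝ) ^ 2 * ∑ b : β, ∑ z : {j : ι // j ≠ i} → β, f b * g (z ⟨i', hne⟩)
      = (Fintype.card β : ℝ) * ∑ b : β, f b *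
          ((Fintype.card β : ℝ) * ∑ z : {j : ι // j ≠ i} → β, g (z ⟨i', hne⟩)) := by
        rw [hN]; rw [Finset.mul_sum, Finset.mul_sum]
        congr 1; funext b
        rw [← Finset.mul_sum]; ring
    _ = (Fintype.card β : ℝ) * ∑ b : β, f b *
          ((Fintype.card β : ℝ) ^ Fintype.card {j : ι // j ≠ i} * ∑ b : β, g b) := by rw [h2]
    _ = (Fintype.card β : ℝ) ^ Fintype.card ι * ((∑ b : β, f b) * ∑ b : β, g b) := by
        rw [← aux_card_ne i, pow_succ, ← Finset.sum_mul]
        ring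


set_option maxHeartbeats 2000000

/-- **Theorem 5 (variance of MoCHy-A⁺ for closed h-motifs).**
`β` is the finite hyperwedge set `Λ` (with `|Λ| ≥ 1`), `J 1, …, J M` are
3-element subsets of `Λ` such that any two distinct ones share at most one
element.  `est` is the estimator `M̂ = (|Λ|/(3r)) · Σᵢ Σⱼ 1[Yᵢ ∈ Jⱼ]`, the
`r ≥ 1` i.i.d. uniform samples being encoded by the uniform distribution on
`Fin r → β`; `μ = E[M̂]` and `q n` is the number of ordered pairs `(j, j')`
with `j ≠ j'` and `|Jⱼ ∩ Jⱼ'| = n`.  Then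
`Var[M̂] = (1/(3r))·M·(|Λ| − 3) + (1/(9r))·Σ_{n=0}^{1} q_n·(n·|Λ| − 9)`. -/
theorem mochyAplus_variance_closed {β : Type*} [Fintype β] [DecidableEq β] [Nonempty β]
    {M r : ℕ} (hr : 1 ≤ r)
    (J : Fin M → Finset β) (hcard : ∀ j, (J j).card = 3)
    (hshare : ∀ j j' : Fin M, j ≠ j' → (J j ∩ J j').card ≤ 1)
    (est : (Fin r → β) → ℝ)
    (hest : ∀ y, est y = ((Fintype.card β : ℝ) / (3 * r)) *
        ∑ i : Fin r, ∑ j : Fin M, (if y i ∈ J j then (1 : ℝ) else 0))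
    (μ : ℝ) (hμ : μ = (∑ y : Fin r → β, est y) / (Fintype.card β : ℝ) ^ r)
    (q : ℕ → ℕ)
    (hq : ∀ n, q n =
      Nat.card {jj : Fin M × Fin M // jj.1 ≠ jj.2 ∧ (J jj.1 ∩ J jj.2).card = n}) :
    (∑ y : Fin r → β, (est y - μ) ^ 2) / (Fintype.card β : ℝ) ^ r
      = 1 / (3 * r) * M * ((Fintype.card β : ℝ) - 3)
        + 1 / (9 * r) *
            ∑ n ∈ Finset.range 2, (q n : ℝ) * (n * (Fintype.card β : ℝ) - 9) := by
  classical
  set N : ℝ := (Fintype.card β : ℝ) with hNdef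
  have hN0 : 0 < N := by
    have := Fintype.card_pos (α := β); positivity
  have hNne : N ≠ 0 := ne_of_gt hN0
  have hNr : N ^ r ≠ 0 := pow_ne_zero _ hNne
  have hrne : (r : ℝ) ≠ 0 := by positivity
  set t : Fin M → β → ℝ := fun j b => if b ∈ J j then (1:ℝ) else 0 with htdef
  set S : (Fin r → β) → ℝ := fun y => ∑ i : Fin r, ∑ j : Fin M, t j (y i) with hSdef
  -- indicator facts
  have hF1 : ∀ j, ∑ b : β, t j b = 3 := by
    intro j; simp [htdef, Finset.sum_boole, hcard j]
  have hF2 : ∀ j j', ∑ b : β, t j b * t j' b = ((J j ∩ J j').card : ℝ) := by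
    intro j j'
    simp only [htdef, ite_zero_mul_ite_zero, one_mul, ← Finset.mem_inter]
    simp [Finset.sum_boole]
    congr 1; ext x; simp
  -- q as a filter cardinality
  have hqfilt : ∀ n, q n = (Finset.univ.filter
      (fun p : Fin M × Fin M => p.1 ≠ p.2 ∧ (J p.1 ∩ J p.2).card = n)).card := by
    intro n
    rw [hq n, Nat.card_eq_fintype_card, Fintype.card_subtype]
  -- sum over off-diagonal pairs of intersection cards = q 1
  set P : Finset (Fin M × Fin M) := Finset.univ.filter (fun p => p.1 ≠ p.2) with hPdef
  have hPsum : ∑ p ∈ P, ((J p.1 ∩ J p.2).card : ℝ) = q 1 := by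
    have h1 : ∀ p ∈ P, ((J p.1 ∩ J p.2).card : ℝ)
        = if (J p.1 ∩ J p.2).card = 1 then (1:ℝ) else 0 := by
      intro p hp
      have hle : (J p.1 ∩ J p.2).card ≤ 1 := hshare _ _ (by simpa [hPdef] using hp)
      interval_cases h : (J p.1 ∩ J p.2).card <;> simp
    rw [Finset.sum_congr rfl h1, Finset.sum_boole, hqfilt 1, hPdef, Finset.filter_filter]
  -- q 0 + q 1 = P.card
  have hPcard : q 0 + q 1 = P.card := by
    rw [hqfilt 0, hqfilt 1]
    have h0 : Finset.univ.filter (fun p : Fin M × Fin M => p.1 ≠ p.2 ∧ (J p.1 ∩ J p.2).card = 0)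
        = P.filter (fun p => ¬ (J p.1 ∩ J p.2).card = 1) := by
      rw [hPdef, Finset.filter_filter]
      apply Finset.filter_congr
      intro p _
      constructor
      · rintro ⟨h, h2⟩; exact ⟨h, by omega⟩
      · rintro ⟨h, h2⟩; exact ⟨h, by have := hshare _ _ h; omega⟩
    have h1 : Finset.univ.filter (fun p : Fin M × Fin M => p.1 ≠ p.2 ∧ (J p.1 ∩ J p.2).card = 1)
        = P.filter (fun p => (J p.1 ∩ J p.2).card = 1) := by
      rw [hPdef, Finset.filter_filter]
    rw [h0, h1, add_comm]
    exact Finset.card_filter_add_card_filter_not _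
  -- diagonal cardinality and M + q0 + q1 = M^2
  have hdiag : (Finset.univ.filter (fun p : Fin M × Fin M => p.1 = p.2)).card = M := by
    have h : Finset.univ.filter (fun p : Fin M × Fin M => p.1 = p.2)
        = Finset.univ.image (fun j : Fin M => (j, j)) := by
      ext p; simp [Prod.ext_iff, eq_comm]
    rw [h, Finset.card_image_of_injective _ (fun a b hab => by simpa [Prod.ext_iff] using hab)]
    simp
  have hM2n : M + (q 0 + q 1) = M * M := by
    rw [hPcard]
    have := Finset.card_filter_add_card_filter_not
      (s := (Finset.univ : Finset (Fin M × Fin M))) (p := fun p => p.1 = p.2)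
    simp only [Finset.card_univ, Fintype.card_prod, Fintype.card_fin] at this
    have hPeq : Finset.univ.filter (fun p : Fin M × Fin M => ¬ p.1 = p.2) = P := by
      rw [hPdef]
    rw [hPeq, hdiag] at this
    omega
  have hM2 : (M:ℝ) ^ 2 = (M:ℝ) + (q 0 : ℝ) + (q 1 : ℝ) := by
    have : ((M + (q 0 + q 1) : ℕ) : ℝ) = ((M * M : ℕ) : ℝ) := by rw [hM2n]
    push_cast at this
    nlinarith [this]
  -- sum over all ordered pairs of intersection cards
  have hcsum : ∑ j : Fin M, ∑ j' : Fin M, ((J j ∩ J j').card : ℝ) = 3 * M + q 1 := by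
    have hpt : ∑ j : Fin M, ∑ j' : Fin M, ((J j ∩ J j').card : ℝ)
        = ∑ p : Fin M × Fin M, ((J p.1 ∩ J p.2).card : ℝ) :=
      (Fintype.sum_prod_type (f := fun p : Fin M × Fin M => ((J p.1 ∩ J p.2).card : ℝ))).symm
    rw [hpt,
      ← Finset.sum_filter_add_sum_filter_not Finset.univ (fun p : Fin M × Fin M => p.1 = p.2)]
    have hdiagsum : ∑ p ∈ Finset.univ.filter (fun p : Fin M × Fin M => p.1 = p.2),
        ((J p.1 ∩ J p.2).card : ℝ) = 3 * M := by
      have h : Finset.univ.filter (fun p : Fin M × Fin M => p.1 = p.2)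
          = Finset.univ.image (fun j : Fin M => (j, j)) := by
        ext p; simp [Prod.ext_iff, eq_comm]
      rw [h, Finset.sum_image (by intro a _ b _ hab; simpa [Prod.ext_iff] using hab)]
      simp [hcard, mul_comm]
    rw [hdiagsum]
    have hoff : Finset.univ.filter (fun p : Fin M × Fin M => ¬ p.1 = p.2) = P := hPdef.symm
    rw [hoff, hPsum]
  -- first moment
  have hSum1 : N * (∑ y : Fin r → β, S y) = N ^ r * (3 * (r:ℝ) * M) := by
    have h : ∑ y : Fin r → β, S y
        = ∑ i : Fin r, ∑ j : Fin M, ∑ y : Fin r → β, t j (y i) := by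
      rw [Finset.sum_comm]
      exact Finset.sum_congr rfl fun i _ => Finset.sum_comm
    rw [h]
    calc N * ∑ i : Fin r, ∑ j : Fin M, ∑ y : Fin r → β, t j (y i)
        = ∑ i : Fin r, ∑ j : Fin M, (N * ∑ y : Fin r → β, t j (y i)) := by
          simp only [Finset.mul_sum]
      _ = ∑ i : Fin r, ∑ j : Fin M, N ^ r * 3 := by
          refine Finset.sum_congr rfl fun i _ => Finset.sum_congr rfl fun j _ => ?_
          have h1 := aux_sum_one (ι := Fin r) i (t j)
          rw [Fintype.card_fin, hF1 j] at h1
          exact h1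
      _ = N ^ r * (3 * (r:ℝ) * M) := by
          simp [Finset.sum_const, Finset.card_univ]
          ring
  have hestS : ∀ y, est y = N / (3*(r:ℝ)) * S y := hest
  have hSumEst : ∑ y : Fin r → β, est y = N / (3*(r:ℝ)) * ∑ y : Fin r → β, S y := by
    simp only [hestS]; rw [← Finset.mul_sum]
  have hSval : ∑ y : Fin r → β, S y = N ^ r * (3 * (r:ℝ) * M) / N := by
    rw [eq_div_iff hNne, mul_comm _ N, hSum1]
  have hμM : μ = M := by
    rw [hμ, hSumEst, hSval]
    field_simp
  -- variance identity
  have hsum_est_eq : ∑ y : Fin r → β, est y = μ * N ^ r := by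
    rw [hμ]; field_simp
  have hcardfun : ((Fintype.card (Fin r → β) : ℕ) : ℝ) = N ^ r := by
    rw [Fintype.card_fun, Fintype.card_fin]; push_cast; rfl
  have hvar : ∑ y : Fin r → β, (est y - μ)^2
      = (∑ y : Fin r → β, est y^2) - N^r * μ^2 := by
    calc ∑ y : Fin r → β, (est y - μ)^2
        = ∑ y : Fin r → β, (est y^2 - 2*μ*est y + μ^2) := by
          refine Finset.sum_congr rfl fun y _ => ?_; ring
      _ = (∑ y : Fin r → β, est y^2) - 2*μ*(∑ y : Fin r → β, est y)
            + ((Fintype.card (Fin r → β) : ℕ) : ℝ) * μ^2 := by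
          rw [Finset.sum_add_distrib, Finset.sum_sub_distrib, ← Finset.mul_sum,
            Finset.sum_const, Finset.card_univ]
          simp [nsmul_eq_mul]
      _ = _ := by rw [hsum_est_eq, hcardfun]; ring
  -- second moment
  have hSum2 : N^2 * ∑ y : Fin r → β, S y^2
      = N^r * (9*(r:ℝ)*((r:ℝ)-1)*(M:ℝ)^2 + N*(r:ℝ)*(3*(M:ℝ) + (q 1:ℝ))) := by
    have hexp : ∀ y : Fin r → β, S y^2
        = ∑ i : Fin r, ∑ i' : Fin r, ∑ j : Fin M, ∑ j' : Fin M, t j (y i) * t j' (y i') := by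
      intro y
      show (∑ i : Fin r, ∑ j : Fin M, t j (y i))^2 = _
      rw [sq, Finset.sum_mul_sum]
      exact Finset.sum_congr rfl fun i _ => Finset.sum_congr rfl fun i' _ =>
        Finset.sum_mul_sum _ _ _ _

    have hswap : ∑ y : Fin r → β, S y^2
        = ∑ i : Fin r, ∑ i' : Fin r, ∑ j : Fin M, ∑ j' : Fin M,
            ∑ y : Fin r → β, t j (y i) * t j' (y i') := by
      simp only [hexp]
      rw [Finset.sum_comm]
      refine Finset.sum_congr rfl fun i _ => ?_
      rw [Finset.sum_comm]
      refine Finset.sum_congr rfl fun i' _ => ?_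
      rw [Finset.sum_comm]
      refine Finset.sum_congr rfl fun j _ => ?_
      rw [Finset.sum_comm]
    have hterm : ∀ i i' : Fin r,
        N^2 * (∑ j : Fin M, ∑ j' : Fin M, ∑ y : Fin r → β, t j (y i) * t j' (y i'))
          = if i = i' then N^r * (N * (3*(M:ℝ) + (q 1:ℝ))) else N^r * (9 * (M:ℝ)^2) := by
      intro i i'
      by_cases hii : i = i'
      · subst hii; rw [if_pos rfl]
        have hjj : ∀ j j' : Fin M, N * ∑ y : Fin r → β, t j (y i) * t j' (y i)
            = N ^ r * ((J j ∩ J j').card : ℝ) := by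
          intro j j'
          have h := aux_sum_one (ι := Fin r) i (fun b => t j b * t j' b)
          rw [Fintype.card_fin, hF2 j j'] at h
          exact h
        have hNB : N * (∑ j : Fin M, ∑ j' : Fin M, ∑ y : Fin r → β, t j (y i) * t j' (y i))
            = N ^ r * (3*(M:ℝ) + (q 1:ℝ)) := by
          calc N * (∑ j : Fin M, ∑ j' : Fin M, ∑ y : Fin r → β, t j (y i) * t j' (y i))
              = ∑ j : Fin M, ∑ j' : Fin M, (N * ∑ y : Fin r → β, t j (y i) * t j' (y i)) := by
                simp only [Finset.mul_sum]
            _ = ∑ j : Fin M, ∑ j' : Fin M, N ^ r * ((J j ∩ J j').card : ℝ) := by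
                exact Finset.sum_congr rfl fun j _ => Finset.sum_congr rfl fun j' _ => hjj j j'
            _ = N ^ r * (3*(M:ℝ) + (q 1:ℝ)) := by
                simp only [← Finset.mul_sum]
                rw [hcsum]
        calc N^2 * (∑ j : Fin M, ∑ j' : Fin M, ∑ y : Fin r → β, t j (y i) * t j' (y i))
            = N * (N * (∑ j : Fin M, ∑ j' : Fin M, ∑ y : Fin r → β, t j (y i) * t j' (y i))) := by
              ring
          _ = N * (N ^ r * (3*(M:ℝ) + (q 1:ℝ))) := by rw [hNB]
          _ = N^r * (N * (3*(M:ℝ) + (q 1:ℝ))) := by ring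
      · rw [if_neg hii]
        have hjj : ∀ j j' : Fin M, N^2 * ∑ y : Fin r → β, t j (y i) * t j' (y i')
            = N ^ r * 9 := by
          intro j j'
          have h := aux_sum_two (ι := Fin r) (Ne.symm hii) (t j) (t j')
          rw [Fintype.card_fin, hF1 j, hF1 j'] at h
          rw [h]; norm_num; rfl
        calc N^2 * (∑ j : Fin M, ∑ j' : Fin M, ∑ y : Fin r → β, t j (y i) * t j' (y i'))
            = ∑ j : Fin M, ∑ j' : Fin M, (N^2 * ∑ y : Fin r → β, t j (y i) * t j' (y i')) := by
              simp only [Finset.mul_sum]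
          _ = ∑ j : Fin M, ∑ j' : Fin M, N ^ r * 9 := by
              exact Finset.sum_congr rfl fun j _ => Finset.sum_congr rfl fun j' _ => hjj j j'
          _ = N^r * (9 * (M:ℝ)^2) := by
              simp [Finset.sum_const, Finset.card_univ]
              ring
    calc N^2 * ∑ y : Fin r → β, S y^2
        = ∑ i : Fin r, ∑ i' : Fin r,
            (N^2 * (∑ j : Fin M, ∑ j' : Fin M, ∑ y : Fin r → β, t j (y i) * t j' (y i'))) := by
          rw [hswap]; simp only [Finset.mul_sum]
      _ = ∑ i : Fin r, ∑ i' : Fin r,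
            (if i = i' then N^r * (N * (3*(M:ℝ) + (q 1:ℝ))) else N^r * (9 * (M:ℝ)^2)) := by
          exact Finset.sum_congr rfl fun i _ => Finset.sum_congr rfl fun i' _ => hterm i i'
      _ = ∑ i : Fin r, ((r:ℝ) * (N^r * (9 * (M:ℝ)^2))
            + (N^r * (N * (3*(M:ℝ) + (q 1:ℝ))) - N^r * (9 * (M:ℝ)^2))) := by
          refine Finset.sum_congr rfl fun i _ => ?_
          have hsplit : ∀ i' : Fin r, (if i = i' then N^r * (N * (3*(M:ℝ) + (q 1:ℝ)))
              else N^r * (9 * (M:ℝ)^2))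
              = N^r * (9 * (M:ℝ)^2)
                + (if i = i' then N^r * (N * (3*(M:ℝ) + (q 1:ℝ))) - N^r * (9 * (M:ℝ)^2)
                    else 0) := by
            intro i'; split <;> ring
          simp only [hsplit]
          rw [Finset.sum_add_distrib, Finset.sum_const, Finset.sum_ite_eq, Finset.card_univ]
          simp [Fintype.card_fin, nsmul_eq_mul]
      _ = N^r * (9*(r:ℝ)*((r:ℝ)-1)*(M:ℝ)^2 + N*(r:ℝ)*(3*(M:ℝ) + (q 1:ℝ))) := by
          rw [Finset.sum_const, Finset.card_univ, Fintype.card_fin, nsmul_eq_mul]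
          ring
  -- final assembly
  have hsum_est_sq : ∑ y : Fin r → β, est y^2
      = (N/(3*(r:ℝ)))^2 * ∑ y : Fin r → β, S y^2 := by
    simp only [hestS, mul_pow]; rw [← Finset.mul_sum]
  have hS2val : ∑ y : Fin r → β, S y^2
      = N^r * (9*(r:ℝ)*((r:ℝ)-1)*(M:ℝ)^2 + N*(r:ℝ)*(3*(M:ℝ) + (q 1:ℝ))) / N^2 := by
    rw [eq_div_iff (pow_ne_zero 2 hNne), mul_comm _ (N^2), hSum2]
  rw [hvar, hsum_est_sq, hS2val, hμM]
  rw [Finset.sum_range_succ, Finset.sum_range_succ, Finset.sum_range_zero]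
  push_cast
  field_simp
  linear_combination (-81) * hM2
end

section
/- Let Λ be a finite set with |Λ| ≥ 1 and let J_1, …, J_M be 2-element subsets of Λ such that any two distinct sets J_j, J_{j'} share at most one element (as holds for the hyperwedge sets of distinct open h-motif instances). Let Y_1, …, Y_r (r ≥ 1) be independent uniform random samples from Λ and define M̂ := (|Λ|/(2r)) · Σ_{i=1}^{r} Σ_{j=1}^{M} 1[Y_i ∈ J_j]. For n ∈ {0,1}, let q_n be the number of ordered pairs (j, j') with j ≠ j' and |J_j ∩ J_{j'}| = n. Then Var[M̂] = (1/(2r)) · M · (|Λ| − 2) + (1/(4r)) · Σ_{n=0}^{1} q_n · (n·|Λ| − 4). (Theorem 5, variance of MoCHy-A⁺ for open h-motifs.) -/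
open Finset

private lemma sum_pi_prod' {β : Type*} [Fintype β] : ∀ {r : ℕ} (F : Fin r → β → ℝ),
    ∑ y : Fin r → β, ∏ i, F i (y i) = ∏ i, ∑ b, F i b := by
  intro r
  induction r with
  | zero => intro F; simp
  | succ n ih =>
    intro F
    rw [← (Fin.consEquiv (fun _ : Fin (n+1) => β)).sum_comp]
    rw [Fintype.sum_prod_type]
    simp only [Fin.consEquiv_apply, Fin.prod_univ_succ, Fin.cons_zero, Fin.cons_succ]
    rw [← Finset.sum_mul_sum]
    rw [ih (fun i => F i.succ)]

private lemma sum_pi_single' {β : Type*} [Fintype β] {r : ℕ} (g : β → ℝ) (i : Fin r) :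
    ∑ y : Fin r → β, g (y i) = (∑ b, g b) * (Fintype.card β : ℝ) ^ (r - 1) := by
  have h := sum_pi_prod' (fun t b => if t = i then g b else (1:ℝ))
  calc ∑ y : Fin r → β, g (y i)
      = ∑ y : Fin r → β, ∏ t, (if t = i then g (y t) else (1:ℝ)) := by
        refine Finset.sum_congr rfl fun y _ => ?_
        rw [Finset.prod_ite_eq' Finset.univ i (fun t => g (y t))]
        simp
    _ = ∏ t, ∑ b, (if t = i then g b else (1:ℝ)) := h
    _ = ∏ t, (if t = i then (∑ b, g b) else (Fintype.card β : ℝ)) := by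
        refine Finset.prod_congr rfl fun t _ => ?_
        split_ifs <;> simp
    _ = (∑ b, g b) * (Fintype.card β : ℝ) ^ (r - 1) := by
        rw [← Finset.mul_prod_erase Finset.univ _ (Finset.mem_univ i)]
        rw [if_pos rfl]
        congr 1
        rw [Finset.prod_congr rfl (fun t ht => if_neg (Finset.mem_erase.1 ht).1),
          Finset.prod_const, Finset.card_erase_of_mem (Finset.mem_univ i), Finset.card_univ,
          Fintype.card_fin]

private lemma sum_pi_pair' {β : Type*} [Fintype β] {r : ℕ} (g h : β → ℝ) {i k : Fin r}
    (hik : i ≠ k) :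
    ∑ y : Fin r → β, g (y i) * h (y k)
      = (∑ b, g b) * (∑ b, h b) * (Fintype.card β : ℝ) ^ (r - 2) := by
  have hmem : k ∈ Finset.univ.erase i := Finset.mem_erase.2 ⟨hik.symm, Finset.mem_univ k⟩
  have h2 := sum_pi_prod' (fun t b => if t = i then g b else if t = k then h b else (1:ℝ))
  calc ∑ y : Fin r → β, g (y i) * h (y k)
      = ∑ y : Fin r → β, ∏ t, (if t = i then g (y t) else if t = k then h (y t) else (1:ℝ)) := by
        refine Finset.sum_congr rfl fun y _ => ?_
        rw [← Finset.mul_prod_erase Finset.univ _ (Finset.mem_univ i), if_pos rfl]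
        congr 1
        rw [Finset.prod_congr rfl (fun t ht => if_neg (Finset.mem_erase.1 ht).1)]
        rw [Finset.prod_ite_eq' _ k (fun t => h (y t)), if_pos hmem]
    _ = ∏ t, ∑ b, (if t = i then g b else if t = k then h b else (1:ℝ)) := h2
    _ = ∏ t, (if t = i then (∑ b, g b) else if t = k then (∑ b, h b)
          else (Fintype.card β : ℝ)) := by
        refine Finset.prod_congr rfl fun t _ => ?_
        split_ifs <;> simp
    _ = (∑ b, g b) * (∑ b, h b) * (Fintype.card β : ℝ) ^ (r - 2) := by
        rw [← Finset.mul_prod_erase Finset.univ _ (Finset.mem_univ i), if_pos rfl]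
        rw [Finset.prod_congr rfl (fun t ht => if_neg (Finset.mem_erase.1 ht).1)]
        rw [← Finset.mul_prod_erase _ _ hmem, if_pos rfl, ← mul_assoc]
        congr 1
        rw [Finset.prod_congr rfl (fun t ht => if_neg (Finset.mem_erase.1 ht).1),
          Finset.prod_const, Finset.card_erase_of_mem hmem,
          Finset.card_erase_of_mem (Finset.mem_univ i), Finset.card_univ, Fintype.card_fin,
          Nat.sub_sub]

private lemma pow_e1 (N : ℝ) {r : ℕ} (hr : 1 ≤ r) : N ^ (r - 1) * N = N ^ r := by
  rw [← pow_succ, Nat.sub_add_cancel hr]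

private lemma pow_e2 (N : ℝ) {r : ℕ} (hr : 1 ≤ r) :
    ((r:ℝ) * r - r) * N ^ (r - 2) * N * N = ((r:ℝ) * r - r) * N ^ r := by
  rcases r with _ | _ | m
  · omega
  · norm_num
  · have h : (m + 2) - 2 = m := rfl
    rw [h]
    push_cast
    ring

/-- **Theorem 5 (variance of MoCHy-A⁺ for open h-motifs).**
`β` is the finite hyperwedge set `Λ` (with `|Λ| ≥ 1`), `J 1, …, J M` are
2-element subsets of `Λ` such that any two distinct ones share at most one
element.  `est` is the estimator `M̂ = (|Λ|/(2r)) · Σᵢ Σⱼ 1[Yᵢ ∈ Jⱼ]`, the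
`r ≥ 1` i.i.d. uniform samples being encoded by the uniform distribution on
`Fin r → β`; `μ = E[M̂]` and `q n` is the number of ordered pairs `(j, j')`
with `j ≠ j'` and `|Jⱼ ∩ Jⱼ'| = n`.  Then
`Var[M̂] = (1/(2r))·M·(|Λ| − 2) + (1/(4r))·Σ_{n=0}^{1} q_n·(n·|Λ| − 4)`. -/
theorem mochyAplus_variance_open {β : Type*} [Fintype β] [DecidableEq β] [Nonempty β]
    {M r : ℕ} (hr : 1 ≤ r)
    (J : Fin M → Finset β) (hcard : ∀ j, (J j).card = 2)
    (hshare : ∀ j j' : Fin M, j ≠ j' → (J j ∩ J j').card ≤ 1)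
    (est : (Fin r → β) → ℝ)
    (hest : ∀ y, est y = ((Fintype.card β : ℝ) / (2 * r)) *
        ∑ i : Fin r, ∑ j : Fin M, (if y i ∈ J j then (1 : ℝ) else 0))
    (μ : ℝ) (hμ : μ = (∑ y : Fin r → β, est y) / (Fintype.card β : ℝ) ^ r)
    (q : ℕ → ℕ)
    (hq : ∀ n, q n =
      Nat.card {jj : Fin M × Fin M // jj.1 ≠ jj.2 ∧ (J jj.1 ∩ J jj.2).card = n}) :
    (∑ y : Fin r → β, (est y - μ) ^ 2) / (Fintype.card β : ℝ) ^ r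
      = 1 / (2 * r) * M * ((Fintype.card β : ℝ) - 2)
        + 1 / (4 * r) *
            ∑ n ∈ Finset.range 2, (q n : ℝ) * (n * (Fintype.card β : ℝ) - 4) := by
  classical
  set N : ℝ := (Fintype.card β : ℝ) with hNdef
  have hNpos : (0:ℝ) < N := by rw [hNdef]; exact_mod_cast Fintype.card_pos
  have hrR : (0:ℝ) < (r:ℝ) := by exact_mod_cast hr
  set S : β → ℝ := fun b => ∑ j : Fin M, (if b ∈ J j then (1:ℝ) else 0) with hSdef
  set A : ℝ := ∑ b, S b with hAdef
  set B : ℝ := ∑ b, S b * S b with hBdef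
  have hPK : N ^ r = N ^ (r - 1) * N := (pow_e1 N hr).symm
  -- q as a real sum over pairs
  have hq' : ∀ n, (q n : ℝ)
      = ∑ p : Fin M × Fin M,
          (if p.1 ≠ p.2 ∧ (J p.1 ∩ J p.2).card = n then (1:ℝ) else 0) := by
    intro n
    rw [hq n, Nat.card_eq_fintype_card, Fintype.card_subtype, Finset.sum_boole]
  have hcast : ∀ p : Fin M × Fin M,
      ∑ b : β, (if b ∈ J p.1 ∩ J p.2 then (1:ℝ) else 0) = ((J p.1 ∩ J p.2).card : ℝ) := by
    intro p
    rw [Finset.sum_boole]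
    norm_cast
    congr 1
    ext b
    simp
  -- A = 2M
  have hA : A = 2 * M := by
    rw [hAdef, hSdef, Finset.sum_comm]
    have h' : ∀ j : Fin M, ∑ b : β, (if b ∈ J j then (1:ℝ) else 0) = 2 := by
      intro j
      have := hcard j
      simp [Finset.sum_boole, this]
    rw [Finset.sum_congr rfl fun j _ => h' j]
    simp [mul_comm]
  have hSS : ∀ b, S b * S b
      = ∑ p : Fin M × Fin M, (if b ∈ J p.1 ∩ J p.2 then (1:ℝ) else 0) := by
    intro b
    rw [hSdef]
    simp only [Fintype.sum_prod_type]
    rw [Finset.sum_mul_sum]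
    refine Finset.sum_congr rfl fun j _ => Finset.sum_congr rfl fun j' _ => ?_
    by_cases h1 : b ∈ J j <;> by_cases h2 : b ∈ J j' <;> simp [h1, h2]
  have hB : B = 2 * M + (q 1 : ℝ) := by
    rw [hBdef]
    rw [Finset.sum_congr rfl fun b _ => hSS b, Finset.sum_comm]
    have hpt : ∀ p : Fin M × Fin M,
        ∑ b : β, (if b ∈ J p.1 ∩ J p.2 then (1:ℝ) else 0)
          = (if p.1 = p.2 then (2:ℝ) else 0)
            + (if p.1 ≠ p.2 ∧ (J p.1 ∩ J p.2).card = 1 then (1:ℝ) else 0) := by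
      intro p
      rw [hcast p]
      by_cases hpp : p.1 = p.2
      · simp [hpp, Finset.inter_self, hcard p.2]
      · have hle := hshare p.1 p.2 hpp
        interval_cases h : (J p.1 ∩ J p.2).card
        · simp [hpp, h]
        · simp [hpp, h]
    rw [Finset.sum_congr rfl fun p _ => hpt p, Finset.sum_add_distrib]
    congr 1
    · rw [Fintype.sum_prod_type]
      have hdiag : ∀ j : Fin M, (∑ j' : Fin M, if j = j' then (2:ℝ) else 0) = 2 := by
        intro j; rw [Finset.sum_ite_eq]; simp
      rw [Finset.sum_congr rfl fun j _ => hdiag j, Finset.sum_const, Finset.card_univ,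
        Fintype.card_fin, nsmul_eq_mul]
      ring
    · rw [hq' 1]
  have hq01 : (q 0 : ℝ) + (q 1 : ℝ) = (M:ℝ) * M - M := by
    rw [hq' 0, hq' 1, ← Finset.sum_add_distrib]
    have hpt : ∀ p : Fin M × Fin M,
        (if p.1 ≠ p.2 ∧ (J p.1 ∩ J p.2).card = 0 then (1:ℝ) else 0)
          + (if p.1 ≠ p.2 ∧ (J p.1 ∩ J p.2).card = 1 then (1:ℝ) else 0)
          = (1:ℝ) - (if p.1 = p.2 then (1:ℝ) else 0) := by
      intro p
      by_cases hpp : p.1 = p.2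
      · simp [hpp]
      · have hle := hshare p.1 p.2 hpp
        interval_cases h : (J p.1 ∩ J p.2).card
        · simp [hpp, h]
        · simp [hpp, h]
    rw [Finset.sum_congr rfl fun p _ => hpt p, Finset.sum_sub_distrib]
    have hone : ∑ _p : Fin M × Fin M, (1:ℝ) = (M:ℝ) * M := by
      rw [Finset.sum_const, Finset.card_univ, Fintype.card_prod, Fintype.card_fin,
        nsmul_eq_mul]
      push_cast
      ring
    have hdiag2 : ∑ p : Fin M × Fin M, (if p.1 = p.2 then (1:ℝ) else 0) = (M:ℝ) := by
      rw [Fintype.sum_prod_type]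
      have hone' : ∀ j : Fin M, (∑ j' : Fin M, if j = j' then (1:ℝ) else 0) = 1 := by
        intro j; rw [Finset.sum_ite_eq]; simp
      rw [Finset.sum_congr rfl fun j _ => hone' j, Finset.sum_const, Finset.card_univ,
        Fintype.card_fin, nsmul_eq_mul, mul_one]
    rw [hone, hdiag2]
  -- est in terms of S
  have hestS : ∀ y, est y = N / (2 * (r:ℝ)) * ∑ i, S (y i) := hest
  -- first moment
  have h1 : ∑ y : Fin r → β, (∑ i, S (y i)) = (r:ℝ) * (A * N ^ (r - 1)) := by
    rw [Finset.sum_comm]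
    rw [Finset.sum_congr rfl fun i _ => sum_pi_single' S i]
    rw [Finset.sum_const, Finset.card_univ, Fintype.card_fin, nsmul_eq_mul]
  -- second moment
  have h2 : ∑ y : Fin r → β, (∑ i, S (y i)) * (∑ k, S (y k))
      = (r:ℝ) * (B * N ^ (r - 1)) + ((r:ℝ) * (r:ℝ) - r) * (A * A * N ^ (r - 2)) := by
    have step : ∀ y : Fin r → β, (∑ i, S (y i)) * (∑ k, S (y k))
        = ∑ i, ∑ k, S (y i) * S (y k) := fun y => Finset.sum_mul_sum _ _ _ _
    rw [Finset.sum_congr rfl fun y _ => step y, Finset.sum_comm]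
    have inner : ∀ i : Fin r, ∑ y : Fin r → β, ∑ k, S (y i) * S (y k)
        = B * N ^ (r - 1) + ((r:ℝ) - 1) * (A * A * N ^ (r - 2)) := by
      intro i
      rw [Finset.sum_comm]
      have pt : ∀ k : Fin r, ∑ y : Fin r → β, S (y i) * S (y k)
          = if i = k then B * N ^ (r - 1) else A * A * N ^ (r - 2) := by
        intro k
        split_ifs with h
        · subst h
          exact sum_pi_single' (fun b => S b * S b) i
        · exact sum_pi_pair' S S h
      rw [Finset.sum_congr rfl fun k _ => pt k,
        ← Finset.add_sum_erase _ _ (Finset.mem_univ i), if_pos rfl]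
      congr 1
      rw [Finset.sum_congr rfl
          (fun k hk => if_neg (fun h => (Finset.mem_erase.1 hk).1 h.symm)),
        Finset.sum_const, Finset.card_erase_of_mem (Finset.mem_univ i), Finset.card_univ,
        Fintype.card_fin, nsmul_eq_mul, Nat.cast_sub hr, Nat.cast_one]
    rw [Finset.sum_congr rfl fun i _ => inner i, Finset.sum_const, Finset.card_univ,
      Fintype.card_fin, nsmul_eq_mul]
    ring
  -- mean
  have hmu : μ = A / 2 := by
    rw [hμ, Finset.sum_congr rfl fun y _ => hestS y, ← Finset.mul_sum, h1, hPK]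
    field_simp
  -- expansion of the variance sum
  have hcardfun : ((Fintype.card (Fin r → β) : ℕ) : ℝ) = N ^ r := by
    rw [hNdef, Fintype.card_fun, Fintype.card_fin]
    push_cast
    rfl
  have hexp : ∑ y : Fin r → β, (est y - μ) ^ 2
      = (N / (2 * (r:ℝ)))^2 * (∑ y : Fin r → β, (∑ i, S (y i)) * (∑ k, S (y k)))
        - (N / (2 * (r:ℝ))) * A * (∑ y : Fin r → β, (∑ i, S (y i)))
        + N ^ r * (A / 2) ^ 2 := by
    have pt : ∀ y : Fin r → β, (est y - μ) ^ 2
        = (N / (2 * (r:ℝ)))^2 * ((∑ i, S (y i)) * (∑ k, S (y k)))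
          - (N / (2 * (r:ℝ))) * A * (∑ i, S (y i)) + (A / 2) ^ 2 := by
      intro y
      rw [hestS y, hmu]
      ring
    rw [Finset.sum_congr rfl fun y _ => pt y, Finset.sum_add_distrib,
      Finset.sum_sub_distrib, ← Finset.mul_sum, ← Finset.mul_sum, Finset.sum_const,
      Finset.card_univ, nsmul_eq_mul, hcardfun]
  have hnum : ∑ y : Fin r → β, (est y - μ) ^ 2
      = N ^ r * ((N * B - A * A) / (4 * (r:ℝ))) := by
    rw [hexp, h1, h2]
    have e1 := pow_e1 N hr
    have e2 := pow_e2 N hr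
    have e3 : ((r:ℝ) - 1) * N ^ (r - 2) * N * N = ((r:ℝ) - 1) * N ^ r :=
      mul_left_cancel₀ hrR.ne' (by linear_combination e2)
    field_simp
    linear_combination 4 * (N * B - 2 * (r:ℝ) * A ^ 2) * e1 + 4 * A ^ 2 * e3
  have hPne : N ^ r ≠ 0 := (pow_pos hNpos r).ne'
  rw [hnum, mul_div_cancel_left₀ _ hPne]
  rw [hA, hB, Finset.sum_range_succ, Finset.sum_range_succ, Finset.sum_range_zero]
  push_cast
  field_simp
  linear_combination 8 * hq01
end

section
/- Let Λ be a finite set with |Λ| ≥ 1 and let J_1, …, J_M (M ≥ 1) be 2-element subsets of Λ. Suppose every element of Λ belongs to at most D of the sets J_1, …, J_M (D ≥ 1). Let Y_1, …, Y_r be independent uniform samples from Λ and M̂ := (|Λ|/(2r)) · Σ_{i=1}^{r} Σ_{j=1}^{M} 1[Y_i ∈ J_j]. Then for any ε, δ > 0, if r > (1/(8ε²)) · (|Λ|·D/M)² · log(2/δ), then Pr(|M̂ − M| ≥ M·ε) ≤ δ. (Theorem 7, concentration bound of MoCHy-A⁺ for open h-motifs; the paper instantiates D = d_max[t], the maximum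 number of adjacent hyperedges over all hyperedges occurring in instances of h-motif t.) -/
open scoped Classical
open Real Finset

section HoeffdingAux


lemma hoeff_phi_nonneg {p : ℝ} (hp0 : 0 ≤ p) (hp1 : p ≤ 1) (h : ℝ) :
    1 - p + p * Real.exp h ≤ Real.exp (p * h + h ^ 2 / 8) := by
  set q : ℝ → ℝ := fun x => 1 - p + p * Real.exp x with hq_def
  have hq : ∀ x, 0 < q x := by
    intro x
    have he := Real.exp_pos x
    show 0 < 1 - p + p * Real.exp x
    rcases eq_or_lt_of_le hp1 with h1 | h1
    · rw [h1]; linarith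
    · nlinarith [mul_nonneg hp0 he.le]
  have hqd : ∀ x, HasDerivAt q (p * Real.exp x) x := by
    intro x
    exact ((Real.hasDerivAt_exp x).const_mul p).const_add (1 - p)
  set φ : ℝ → ℝ := fun x => p * x + x ^ 2 / 8 - Real.log (q x) with hφ_def
  set φ' : ℝ → ℝ := fun x => p + x / 4 - p * Real.exp x / q x with hφ'_def
  have hφd : ∀ x, HasDerivAt φ (φ' x) x := by
    intro x
    have h1 : HasDerivAt (fun y : ℝ => p * y + y ^ 2 / 8) (p + x / 4) x := by
      have := ((hasDerivAt_id x).const_mul p).add ((hasDerivAt_pow 2 x).div_const 8)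
      exact this.congr_deriv (by push_cast; ring)
    have h2 : HasDerivAt (fun x => Real.log (q x)) (p * Real.exp x / q x) x :=
      (hqd x).log (hq x).ne'
    exact h1.sub h2
  set φ'' : ℝ → ℝ := fun x => 1 / 4 - p * Real.exp x * (1 - p) / (q x) ^ 2 with hφ''_def
  have hφ'd : ∀ x, HasDerivAt φ' (φ'' x) x := by
    intro x
    have h1 : HasDerivAt (fun y : ℝ => p + y / 4) (1 / 4) x := by
      simpa using ((hasDerivAt_id x).div_const 4).const_add p
    have h2 : HasDerivAt (fun x => p * Real.exp x / q x)
        ((p * Real.exp x * q x - p * Real.exp x * (p * Real.exp x)) / (q x) ^ 2) x :=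
      ((Real.hasDerivAt_exp x).const_mul p).div (hqd x) (hq x).ne'
    have h3 := h1.sub h2
    have hnum : p * Real.exp x * q x - p * Real.exp x * (p * Real.exp x)
        = p * Real.exp x * (1 - p) := by
      show p * Real.exp x * (1 - p + p * Real.exp x) - _ = _
      ring
    rw [hnum] at h3
    exact h3
  have hφ''nn : ∀ x, 0 ≤ φ'' x := by
    intro x
    have hqx := hq x
    have hex := Real.exp_pos x
    rw [hφ''_def]
    rw [sub_nonneg, div_le_iff₀ (by positivity)]
    have hq' : q x = 1 - p + p * Real.exp x := rfl
    rw [hq']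
    nlinarith [sq_nonneg ((1 - p) - p * Real.exp x)]
  have hmono : Monotone φ' :=
    monotone_of_deriv_nonneg (fun x => (hφ'd x).differentiableAt)
      (fun x => by rw [(hφ'd x).deriv]; exact hφ''nn x)
  have hφ0 : φ 0 = 0 := by
    simp [hφ_def, hq_def]
  have hφ'0 : φ' 0 = 0 := by
    have h0 : q 0 = 1 := by simp [hq_def]
    simp [hφ'_def, h0]
  have key : ∀ x, 0 ≤ φ x := by
    intro x
    rcases lt_trichotomy x 0 with hx | hx | hx
    · obtain ⟨c, hc, hslope⟩ := exists_hasDerivAt_eq_slope φ φ' hx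
        (fun y _ => (hφd y).differentiableAt.continuousAt.continuousWithinAt)
        (fun y _ => hφd y)
      have hc' : φ' c ≤ 0 := hφ'0 ▸ hmono hc.2.le
      rw [hslope, hφ0] at hc'
      have h1 : (0:ℝ) < 0 - x := by linarith
      rcases div_nonpos_iff.mp hc' with ⟨h2, h3⟩ | ⟨h2, h3⟩
      · linarith
      · linarith
    · rw [hx, hφ0]
    · obtain ⟨c, hc, hslope⟩ := exists_hasDerivAt_eq_slope φ φ' hx
        (fun y _ => (hφd y).differentiableAt.continuousAt.continuousWithinAt)
        (fun y _ => hφd y)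
      have hc' : 0 ≤ φ' c := hφ'0 ▸ hmono hc.1.le
      rw [hslope, hφ0] at hc'
      have h1 : (0:ℝ) < x - 0 := by linarith
      rcases div_nonneg_iff.mp hc' with ⟨h2, h3⟩ | ⟨h2, h3⟩
      · linarith
      · linarith
  have hkey := key h
  have hlog : Real.log (q h) ≤ p * h + h ^ 2 / 8 := by
    have : φ h = p * h + h ^ 2 / 8 - Real.log (q h) := rfl
    rw [this] at hkey
    linarith
  calc 1 - p + p * Real.exp h = Real.exp (Real.log (q h)) := by rw [Real.exp_log (hq h)]
    _ ≤ Real.exp (p * h + h ^ 2 / 8) := Real.exp_le_exp.mpr hlog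

lemma hoeff_mgf {β : Type*} [Fintype β] [Nonempty β] (f : β → ℝ) (D : ℝ) (hD : 0 < D)
    (h0 : ∀ b, 0 ≤ f b) (h1 : ∀ b, f b ≤ D) (l : ℝ) :
    ∑ b : β, Real.exp (l * f b) ≤
      (Fintype.card β : ℝ) *
        Real.exp (l * ((∑ b : β, f b) / (Fintype.card β : ℝ)) + l ^ 2 * D ^ 2 / 8) := by
  set n : ℝ := (Fintype.card β : ℝ) with hn_def
  have hn : 0 < n := by
    have := Fintype.card_pos_iff.mpr ‹Nonempty β›
    positivity
  set μ : ℝ := (∑ b : β, f b) / n with hμ_def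
  have hμ0 : 0 ≤ μ := by
    apply div_nonneg _ hn.le
    exact Finset.sum_nonneg fun b _ => h0 b
  have hμD : μ ≤ D := by
    rw [hμ_def, div_le_iff₀ hn]
    calc ∑ b : β, f b ≤ ∑ _b : β, D := Finset.sum_le_sum fun b _ => h1 b
      _ = D * n := by simp [hn_def, mul_comm]
  -- convexity pointwise bound
  have step1 : ∀ b, Real.exp (l * f b) ≤ (1 - f b / D) + (f b / D) * Real.exp (l * D) := by
    intro b
    have ha : 0 ≤ 1 - f b / D := by
      rw [sub_nonneg, div_le_one hD]; exact h1 b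
    have hb : 0 ≤ f b / D := div_nonneg (h0 b) hD.le
    have hab : (1 - f b / D) + f b / D = 1 := by ring
    have := convexOn_exp.2 (Set.mem_univ (0:ℝ)) (Set.mem_univ (l * D)) ha hb hab
    simp only [smul_eq_mul, mul_zero, Real.exp_zero, mul_one] at this
    have harg : (0:ℝ) + f b / D * (l * D) = l * f b := by
      field_simp
      ring
    rw [harg] at this
    linarith
  have step2 : ∑ b : β, Real.exp (l * f b) ≤ n * (1 - μ / D + (μ / D) * Real.exp (l * D)) := by
    calc ∑ b : β, Real.exp (l * f b)
        ≤ ∑ b : β, ((1 - f b / D) + (f b / D) * Real.exp (l * D)) :=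
          Finset.sum_le_sum fun b _ => step1 b
      _ = n * (1 - μ / D + (μ / D) * Real.exp (l * D)) := by
          rw [Finset.sum_add_distrib]
          simp only [Finset.sum_sub_distrib, Finset.sum_const, Finset.card_univ, nsmul_eq_mul,
            mul_one, ← Finset.sum_div, ← Finset.sum_mul]
          have hS : ∑ b : β, f b = n * μ := by
            rw [hμ_def]; field_simp
          rw [hS]
          field_simp
          ring
  have hp0 : 0 ≤ μ / D := div_nonneg hμ0 hD.le
  have hp1 : μ / D ≤ 1 := by rw [div_le_one hD]; exact hμD
  have step3 := hoeff_phi_nonneg hp0 hp1 (l * D)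
  have harg2 : μ / D * (l * D) + (l * D) ^ 2 / 8 = l * μ + l ^ 2 * D ^ 2 / 8 := by
    field_simp
  rw [harg2] at step3
  calc ∑ b : β, Real.exp (l * f b) ≤ n * (1 - μ / D + (μ / D) * Real.exp (l * D)) := step2
    _ ≤ n * Real.exp (l * μ + l ^ 2 * D ^ 2 / 8) := by
        apply mul_le_mul_of_nonneg_left step3 hn.le

lemma hoeff_tail {β : Type*} [Fintype β] [Nonempty β] [DecidableEq β] {r : ℕ} (hr : 0 < r)
    (f : β → ℝ) (D t : ℝ) (hD : 0 < D) (ht : 0 < t)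
    (h0 : ∀ b, 0 ≤ f b) (h1 : ∀ b, f b ≤ D) :
    ((Finset.univ.filter fun y : Fin r → β =>
        (∑ i : Fin r, f (y i)) - r * ((∑ b : β, f b) / (Fintype.card β : ℝ)) ≥ t).card : ℝ)
      ≤ (Fintype.card β : ℝ) ^ r * Real.exp (-2 * t ^ 2 / (r * D ^ 2)) := by
  set n : ℝ := (Fintype.card β : ℝ) with hn_def
  have hn : 0 < n := by
    have := Fintype.card_pos_iff.mpr ‹Nonempty β›
    positivity
  have hrR : (0:ℝ) < (r:ℝ) := by exact_mod_cast hr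
  set μ : ℝ := (∑ b : β, f b) / n with hμ_def
  set l : ℝ := 4 * t / (r * D ^ 2) with hl_def
  have hl : 0 < l := by positivity
  set A := Finset.univ.filter fun y : Fin r → β => (∑ i : Fin r, f (y i)) - r * μ ≥ t with hA
  -- step 1: card A ≤ ∑ over all y of exp(l*(S y - r μ - t))
  have step1 : (A.card : ℝ) ≤
      ∑ y : Fin r → β, Real.exp (l * ((∑ i : Fin r, f (y i)) - r * μ - t)) := by
    have h2 : (A.card : ℝ) = ∑ _y ∈ A, (1:ℝ) := by simp
    rw [h2]
    calc ∑ _y ∈ A, (1:ℝ)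
        ≤ ∑ y ∈ A, Real.exp (l * ((∑ i : Fin r, f (y i)) - r * μ - t)) := by
          apply Finset.sum_le_sum
          intro y hy
          rw [hA, Finset.mem_filter] at hy
          have : 0 ≤ l * ((∑ i : Fin r, f (y i)) - r * μ - t) := by
            apply mul_nonneg hl.le
            linarith [hy.2]
          calc (1:ℝ) = Real.exp 0 := by simp
            _ ≤ _ := Real.exp_le_exp.mpr this
      _ ≤ ∑ y : Fin r → β, Real.exp (l * ((∑ i : Fin r, f (y i)) - r * μ - t)) := by
          apply Finset.sum_le_sum_of_subset_of_nonneg (Finset.filter_subset _ _)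
          intro y _ _
          exact (Real.exp_pos _).le
  -- step 2: factor the sum
  have step2 : ∑ y : Fin r → β, Real.exp (l * ((∑ i : Fin r, f (y i)) - r * μ - t))
      = Real.exp (-(l * (r * μ + t))) * (∑ b : β, Real.exp (l * f b)) ^ r := by
    have hfac : ∀ y : Fin r → β, Real.exp (l * ((∑ i : Fin r, f (y i)) - r * μ - t))
        = Real.exp (-(l * (r * μ + t))) * ∏ i : Fin r, Real.exp (l * f (y i)) := by
      intro y
      rw [← Real.exp_sum, ← Real.exp_add]
      congr 1
      rw [← Finset.mul_sum]
      ring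
    simp only [hfac]
    rw [← Finset.mul_sum]
    congr 1
    rw [show (Finset.univ : Finset (Fin r → β)) = Fintype.piFinset fun _ => Finset.univ from
      (Fintype.piFinset_univ).symm]
    rw [Finset.sum_prod_piFinset Finset.univ (fun (_ : Fin r) b => Real.exp (l * f b))]
    simp [Finset.prod_const, Finset.card_univ]
  have step3 := hoeff_mgf f D hD h0 h1 l
  have hsum_nn : (0:ℝ) ≤ ∑ b : β, Real.exp (l * f b) :=
    Finset.sum_nonneg fun b _ => (Real.exp_pos _).le
  have hpow : (∑ b : β, Real.exp (l * f b)) ^ r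
      ≤ (n * Real.exp (l * μ + l ^ 2 * D ^ 2 / 8)) ^ r :=
    pow_le_pow_left₀ hsum_nn step3 r
  calc (A.card : ℝ)
      ≤ Real.exp (-(l * (r * μ + t))) * (∑ b : β, Real.exp (l * f b)) ^ r := by
        rw [← step2]; exact step1
    _ ≤ Real.exp (-(l * (r * μ + t))) * (n * Real.exp (l * μ + l ^ 2 * D ^ 2 / 8)) ^ r :=
        mul_le_mul_of_nonneg_left hpow (Real.exp_pos _).le
    _ = n ^ r * Real.exp (-(l * (r * μ + t)) + r * (l * μ + l ^ 2 * D ^ 2 / 8)) := by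
        rw [mul_pow, ← Real.exp_nat_mul, mul_left_comm, ← Real.exp_add]
    _ = n ^ r * Real.exp (-2 * t ^ 2 / (r * D ^ 2)) := by
        congr 1
        rw [hl_def]
        field_simp
        ring


end HoeffdingAux

set_option maxHeartbeats 1000000 in
/-- **Theorem 7 (concentration bound of MoCHy-A⁺ for open h-motifs).**
`β` is the finite hyperwedge set `Λ` (with `|Λ| ≥ 1`), `J 1, …, J M` (`M ≥ 1`)
are 2-element subsets of `Λ`, and every element of `Λ` belongs to at most
`D ≥ 1` of them.  The `r` i.i.d. uniform samples are encoded by the uniform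
distribution on `Fin r → β`, and the probability of the deviation event is the
number of sample vectors realizing it divided by `|Λ|^r`.  If
`r > (1/(8ε²)) · (|Λ|·D/M)² · log(2/δ)`, then `Pr(|M̂ − M| ≥ M·ε) ≤ δ`. -/
theorem mochyAplus_concentration_open {β : Type*} [Fintype β] [DecidableEq β] [Nonempty β]
    {M r D : ℕ} (hM : 1 ≤ M) (hD : 1 ≤ D)
    (J : Fin M → Finset β) (hcard : ∀ j, (J j).card = 2)
    (hdeg : ∀ b : β, (Finset.univ.filter fun j => b ∈ J j).card ≤ D)
    (ε δ : ℝ) (hε : 0 < ε) (hδ : 0 < δ)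
    (hr : (r : ℝ) >
      1 / (8 * ε ^ 2) * ((Fintype.card β : ℝ) * D / M) ^ 2 * Real.log (2 / δ)) :
    ((Finset.univ.filter fun y : Fin r → β =>
        |((Fintype.card β : ℝ) / (2 * r)) *
            (∑ i : Fin r, ∑ j : Fin M, if y i ∈ J j then (1 : ℝ) else 0) - M|
          ≥ M * ε).card : ℝ)
      / (Fintype.card β : ℝ) ^ r ≤ δ := by
  have hn : (0:ℝ) < (Fintype.card β : ℝ) := by
    have := Fintype.card_pos_iff.mpr ‹Nonempty β›
    positivity
  set n : ℝ := (Fintype.card β : ℝ) with hn_def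
  have hnr : (0:ℝ) < n ^ r := pow_pos hn r
  set F := Finset.univ.filter fun y : Fin r → β =>
    |(n / (2 * r)) * (∑ i : Fin r, ∑ j : Fin M, if y i ∈ J j then (1 : ℝ) else 0) - M|
      ≥ M * ε with hF_def
  -- trivial bound if δ > 1
  by_cases hδ1 : 1 < δ
  · have hcle : (F.card : ℝ) ≤ n ^ r := by
      have h1 : F.card ≤ (Finset.univ : Finset (Fin r → β)).card :=
        Finset.card_filter_le _ _
      have h2 : (Finset.univ : Finset (Fin r → β)).card = Fintype.card β ^ r := by
        simp [Fintype.card_fun]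
      rw [h2] at h1
      have h3 := (Nat.cast_le (α := ℝ)).mpr h1
      rw [Nat.cast_pow] at h3
      rw [hn_def]
      exact h3
    rw [div_le_iff₀ hnr]
    nlinarith [hcle, hnr]
  push_neg at hδ1
  -- main case : δ ≤ 1
  have hL : 0 ≤ Real.log (2 / δ) := Real.log_nonneg (by rw [le_div_iff₀ hδ]; linarith)
  have hMR : (1:ℝ) ≤ (M:ℝ) := by exact_mod_cast hM
  have hDR : (1:ℝ) ≤ (D:ℝ) := by exact_mod_cast hD
  have hDpos : (0:ℝ) < (D:ℝ) := by linarith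
  have hMpos : (0:ℝ) < (M:ℝ) := by linarith
  have hnonneg : (0:ℝ) ≤ 1 / (8 * ε ^ 2) * (n * D / M) ^ 2 * Real.log (2 / δ) :=
    mul_nonneg (by positivity) hL
  have hrR : (0:ℝ) < (r:ℝ) := lt_of_le_of_lt hnonneg hr
  have hrpos : 0 < r := by exact_mod_cast hrR
  -- the per-sample count function
  set f : β → ℝ := fun b => ((Finset.univ.filter fun j => b ∈ J j).card : ℝ) with hf_def
  have hf0 : ∀ b, 0 ≤ f b := fun b => by simp only [hf_def]; positivity
  have hfD : ∀ b, f b ≤ (D:ℝ) := fun b => by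
    simp only [hf_def]
    exact_mod_cast hdeg b
  have hsumf : ∑ b : β, f b = 2 * M := by
    have h1 : ∀ b : β, f b = ∑ j : Fin M, (if b ∈ J j then (1:ℝ) else 0) := by
      intro b
      rw [hf_def]
      rw [Finset.sum_boole]
    simp only [h1]
    rw [Finset.sum_comm]
    have h2 : ∀ j : Fin M, ∑ b : β, (if b ∈ J j then (1:ℝ) else 0) = 2 := by
      intro j
      rw [Finset.sum_boole, Finset.filter_univ_mem, hcard j]
      norm_num
    simp only [h2]
    simp [mul_comm]
  have hinner : ∀ y : Fin r → β,
      (∑ i : Fin r, ∑ j : Fin M, if y i ∈ J j then (1:ℝ) else 0) = ∑ i : Fin r, f (y i) := by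
    intro y
    apply Finset.sum_congr rfl
    intro i _
    rw [hf_def, Finset.sum_boole]
  set g : β → ℝ := fun b => (D:ℝ) - f b with hg_def
  have hg0 : ∀ b, 0 ≤ g b := fun b => by simp [hg_def]; linarith [hfD b]
  have hgD : ∀ b, g b ≤ (D:ℝ) := fun b => by simp [hg_def]; linarith [hf0 b]
  set t : ℝ := 2 * r * M * ε / n with ht_def
  have ht : 0 < t := by positivity
  set A := Finset.univ.filter fun y : Fin r → β =>
    (∑ i : Fin r, f (y i)) - r * ((∑ b : β, f b) / n) ≥ t with hA_def
  set B := Finset.univ.filter fun y : Fin r → β =>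
    (∑ i : Fin r, g (y i)) - r * ((∑ b : β, g b) / n) ≥ t with hB_def
  have hsumg : ∑ b : β, g b = n * D - 2 * M := by
    simp only [hg_def, Finset.sum_sub_distrib, hsumf, Finset.sum_const, Finset.card_univ,
      nsmul_eq_mul, hn_def]
  -- subset claim
  have hsub : F ⊆ A ∪ B := by
    intro y hy
    rw [hF_def, Finset.mem_filter] at hy
    have hy2 := hy.2
    rw [hinner y] at hy2
    set S : ℝ := ∑ i : Fin r, f (y i) with hS_def
    rw [Finset.mem_union, hA_def, hB_def, Finset.mem_filter, Finset.mem_filter]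
    rcases le_abs.mp hy2 with h | h
    · left
      refine ⟨Finset.mem_univ _, ?_⟩
      rw [hsumf]
      have h3 : (M:ℝ) * ε + M ≤ n / (2 * r) * S := by linarith
      rw [div_mul_eq_mul_div, le_div_iff₀ (by positivity : (0:ℝ) < 2 * r)] at h3
      rw [ge_iff_le, ht_def]
      have heq : S - r * (2 * M / n) = (n * S - 2 * r * M) / n := by
        field_simp
      rw [heq, div_le_div_iff_of_pos_right hn]
      have h5 : ((M:ℝ) * ε + M) * (2 * r) = 2 * r * M * ε + 2 * r * M := by ring
      rw [h5] at h3
      linarith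
    · right
      refine ⟨Finset.mem_univ _, ?_⟩
      rw [hsumg]
      have hgs : ∑ i : Fin r, g (y i) = r * D - S := by
        simp only [hg_def, Finset.sum_sub_distrib, Finset.sum_const, Finset.card_univ,
          Fintype.card_fin, nsmul_eq_mul, hS_def]
      rw [hgs]
      have h3 : n / (2 * r) * S ≤ (M:ℝ) - M * ε := by linarith
      rw [div_mul_eq_mul_div, div_le_iff₀ (by positivity : (0:ℝ) < 2 * r)] at h3
      rw [ge_iff_le, ht_def]
      have heq : r * D - S - r * ((n * D - 2 * M) / n) = (2 * r * M - n * S) / n := by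
        field_simp
        ring
      rw [heq, div_le_div_iff_of_pos_right hn]
      have h5 : ((M:ℝ) - M * ε) * (2 * r) = 2 * r * M - 2 * r * M * ε := by ring
      rw [h5] at h3
      linarith
  -- tail bounds
  have hAcard := hoeff_tail hrpos f (D:ℝ) t hDpos ht hf0 hfD
  have hBcard := hoeff_tail hrpos g (D:ℝ) t hDpos ht hg0 hgD
  have hcard2 : (F.card : ℝ) ≤ 2 * (n ^ r * Real.exp (-2 * t ^ 2 / (r * D ^ 2))) := by
    have h1 := Finset.card_le_card hsub
    have h2 := Finset.card_union_le A B
    have h3 : ((A ∪ B).card : ℝ) ≤ (A.card : ℝ) + B.card := by exact_mod_cast h2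
    have h4 : (F.card : ℝ) ≤ ((A ∪ B).card : ℝ) := by exact_mod_cast h1
    calc (F.card : ℝ) ≤ ((A ∪ B).card : ℝ) := h4
      _ ≤ (A.card : ℝ) + B.card := h3
      _ ≤ n ^ r * Real.exp (-2 * t ^ 2 / (r * D ^ 2))
          + n ^ r * Real.exp (-2 * t ^ 2 / (r * D ^ 2)) := add_le_add hAcard hBcard
      _ = 2 * (n ^ r * Real.exp (-2 * t ^ 2 / (r * D ^ 2))) := by ring
  -- exponent bound
  have hexp : Real.exp (-2 * t ^ 2 / (r * D ^ 2)) ≤ δ / 2 := by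
    rw [← Real.exp_log (show (0:ℝ) < δ / 2 by positivity)]
    apply Real.exp_le_exp.mpr
    have hlogeq : Real.log (δ / 2) = -Real.log (2 / δ) := by
      rw [← Real.log_inv, inv_div]
    rw [hlogeq]
    have hK2 : (0:ℝ) < (n * D / M) ^ 2 := by positivity
    have h1 : Real.log (2 / δ) * (n * D / M) ^ 2 / (8 * ε ^ 2) < (r:ℝ) := by
      calc Real.log (2 / δ) * (n * D / M) ^ 2 / (8 * ε ^ 2)
          = 1 / (8 * ε ^ 2) * (n * D / M) ^ 2 * Real.log (2 / δ) := by ring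
        _ < (r:ℝ) := hr
    rw [div_lt_iff₀ (by positivity : (0:ℝ) < 8 * ε ^ 2)] at h1
    have h2 : Real.log (2 / δ) < (r * (8 * ε ^ 2)) / (n * D / M) ^ 2 :=
      (lt_div_iff₀ hK2).mpr h1
    have h3 : (r * (8 * ε ^ 2)) / (n * D / M) ^ 2 = 2 * t ^ 2 / (r * D ^ 2) := by
      rw [ht_def]
      field_simp
      ring
    rw [h3] at h2
    have h4 : -2 * t ^ 2 / ((r:ℝ) * D ^ 2) = -(2 * t ^ 2 / ((r:ℝ) * D ^ 2)) := by ring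
    rw [h4, neg_le_neg_iff]
    exact h2.le
  -- conclude
  rw [div_le_iff₀ hnr]
  calc (F.card : ℝ)
      ≤ 2 * (n ^ r * Real.exp (-2 * t ^ 2 / (r * D ^ 2))) := hcard2
    _ ≤ 2 * (n ^ r * (δ / 2)) := by
        apply mul_le_mul_of_nonneg_left _ (by norm_num)
        exact mul_le_mul_of_nonneg_left hexp hnr.le
    _ = δ * n ^ r := by ring
end

section
/- Let e_1, …, e_m be pairwise-distinct nonempty finite sets (the hyperedges of a hypergraph), and say e_a is adjacent to e_b if a ≠ b and e_a ∩ e_b ≠ ∅. For any indices i < j < k such that the three hyperedges e_i, e_j, e_k are connected (at least one of them is adjacent to the other two), there exists exactly one index a ∈ {i, j, k} such that, writing {b, c} := {i, j, k} ∖ {a}, both e_b and e_c are adjacent to e_a and moreover e_b ∩ e_c = ∅ or a < min(b, c). (Correctness of the counting condition of MoCHy-E: each h-motif instance is counted exactly once.) -/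
/-- **Correctness of the counting condition of MoCHy-E (Algorithm 2).**
The hyperedges are pairwise-distinct nonempty finite sets `e 1, …, e m`;
`e a` is adjacent to `e b` iff `a ≠ b` and `e a ∩ e b ≠ ∅`.  For indices
`i < j < k` whose hyperedges are connected (at least one of them is adjacent
to the other two), there is exactly one index `a ∈ {i, j, k}` such that,
with `{b, c} = {i, j, k} ∖ {a}`, both `e b` and `e c` are adjacent to `e a`
and moreover `e b ∩ e c = ∅` or `a < min (b, c)`. -/
theorem mochyE_counted_once {V : Type*} [DecidableEq V] {m : ℕ}
    (e : Fin m → Finset V) (hdist : Function.Injective e)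
    (hne : ∀ a, (e a).Nonempty)
    (i j k : Fin m) (hij : i < j) (hjk : j < k)
    (hconn :
      ((e i ∩ e j).Nonempty ∧ (e i ∩ e k).Nonempty) ∨
      ((e j ∩ e i).Nonempty ∧ (e j ∩ e k).Nonempty) ∨
      ((e k ∩ e i).Nonempty ∧ (e k ∩ e j).Nonempty)) :
    ∃! a : Fin m,
      (a = i ∧ (e i ∩ e j).Nonempty ∧ (e i ∩ e k).Nonempty ∧
        (e j ∩ e k = ∅ ∨ (i < j ∧ i < k))) ∨
      (a = j ∧ (e j ∩ e i).Nonempty ∧ (e j ∩ e k).Nonempty ∧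
        (e i ∩ e k = ∅ ∨ (j < i ∧ j < k))) ∨
      (a = k ∧ (e k ∩ e i).Nonempty ∧ (e k ∩ e j).Nonempty ∧
        (e i ∩ e j = ∅ ∨ (k < i ∧ k < j))) := by
  have hik : i < k := hij.trans hjk
  have nij : ¬ j < i := asymm hij
  have nik : ¬ k < i := asymm hik
  have njk : ¬ k < j := asymm hjk
  by_cases hA : (e i ∩ e j).Nonempty <;>
    by_cases hB : (e i ∩ e k).Nonempty <;>
      by_cases hC : (e j ∩ e k).Nonempty
  all_goals
    simp only [Finset.inter_comm (e j) (e i), Finset.inter_comm (e k) (e i),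
      Finset.inter_comm (e k) (e j)] at hconn ⊢
  -- A B C
  · refine ⟨i, Or.inl ⟨rfl, hA, hB, Or.inr ⟨hij, hik⟩⟩, ?_⟩
    rintro a (⟨rfl, _⟩ | ⟨rfl, _, _, h | h⟩ | ⟨rfl, _, _, h | h⟩)
    · rfl
    · exact absurd h hB.ne_empty
    · exact absurd h.1 nij
    · exact absurd h hA.ne_empty
    · exact absurd h.1 nik
  -- A B ¬C
  · refine ⟨i, Or.inl ⟨rfl, hA, hB, Or.inr ⟨hij, hik⟩⟩, ?_⟩
    rintro a (⟨rfl, _⟩ | ⟨rfl, _, hc, _⟩ | ⟨rfl, _, hc, _⟩)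
    · rfl
    · exact absurd hc hC
    · exact absurd hc hC
  -- A ¬B C
  · refine ⟨j, Or.inr (Or.inl ⟨rfl, hA, hC,
      Or.inl (Finset.not_nonempty_iff_eq_empty.mp hB)⟩), ?_⟩
    rintro a (⟨rfl, _, hb, _⟩ | ⟨rfl, _⟩ | ⟨rfl, _, _, h | h⟩)
    · exact absurd hb hB
    · rfl
    · exact absurd h hA.ne_empty
    · exact absurd h.1 nik
  -- A ¬B ¬C
  · rcases hconn with ⟨_, h⟩ | ⟨_, h⟩ | ⟨h, _⟩ <;>
      [exact absurd h hB; exact absurd h hC; exact absurd h hB]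
  -- ¬A B C
  · refine ⟨k, Or.inr (Or.inr ⟨rfl, hB, hC,
      Or.inl (Finset.not_nonempty_iff_eq_empty.mp hA)⟩), ?_⟩
    rintro a (⟨rfl, ha, _⟩ | ⟨rfl, ha, _⟩ | ⟨rfl, _⟩)
    · exact absurd ha hA
    · exact absurd ha hA
    · rfl
  -- ¬A B ¬C
  · rcases hconn with ⟨h, _⟩ | ⟨h, _⟩ | ⟨_, h⟩ <;>
      [exact absurd h hA; exact absurd h hA; exact absurd h hC]
  -- ¬A ¬B C
  · rcases hconn with ⟨h, _⟩ | ⟨h, _⟩ | ⟨h, _⟩ <;>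
      [exact absurd h hA; exact absurd h hA; exact absurd h hB]
  -- none
  · rcases hconn with ⟨h, _⟩ | ⟨h, _⟩ | ⟨h, _⟩ <;>
      [exact absurd h hA; exact absurd h hA; exact absurd h hB]
end

section
/- Let R be the set of the 7 nonempty subsets of {0,1,2} and let k ≥ 2 be an integer. Call a function p : R → {0,1,…,k−1} a valid pattern if: (distinctness) for every pair i ≠ j in {0,1,2} there exists S ∈ R with p(S) ≠ 0 and exactly one of i, j belonging to S; and (connectedness) the graph on {0,1,2} in which i and j (i ≠ j) are joined iff there exists S ∈ R with {i,j} ⊆ S and p(S) ≠ 0, is connected. The symmetric group S_3 acts on patterns by permuting {0,1,2} (and correspondingly the subsets in R). Then the number X(k) of orbits of valid patterns under this action equals k(k−1)(k⁵ + k⁴ + 4k³ + k² − 4k + 2)/6. In particular X(2) = 26, X(3) = 431, X(4) = 3076, X(5) = 14190, and X(6) = 49750. (Equation (17), the number of kh-motifs.) -/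
/-- A region: a nonempty subset of `{0,1,2}`; there are 7 of them. -/
abbrev Region3 : Type := {S : Finset (Fin 3) // S.Nonempty}

/-- The graph on `{0,1,2}` in which `i ≠ j` are joined iff some region `S`
with `p S ≠ 0` contains both `i` and `j`. -/
def patternGraphK {k : ℕ} (p : Region3 → Fin k) : SimpleGraph (Fin 3) where
  Adj i j := i ≠ j ∧ ∃ S : Region3, (p S).val ≠ 0 ∧ i ∈ S.1 ∧ j ∈ S.1
  symm := by
    constructor
    rintro i j ⟨hij, S, hS, hi, hj⟩
    exact ⟨hij.symm, S, hS, hj, hi⟩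
  loopless := by
    constructor
    rintro i ⟨h, -⟩
    exact h rfl

/-- A `k`-ary pattern `p : R → {0,…,k−1}` is valid if it satisfies
distinctness (every pair `i ≠ j` is separated by some region `S` with
`p S ≠ 0` containing exactly one of `i, j`) and connectedness (the associated
graph on `{0,1,2}` is connected). -/
def ValidPatternK {k : ℕ} (p : Region3 → Fin k) : Prop :=
  (∀ i j : Fin 3, i ≠ j →
    ∃ S : Region3, (p S).val ≠ 0 ∧ ((i ∈ S.1 ∧ j ∉ S.1) ∨ (i ∉ S.1 ∧ j ∈ S.1))) ∧
  (patternGraphK p).Connected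

/-- The `S₃`-symmetry relation on valid `k`-ary patterns. -/
def PatternRelK {k : ℕ} (p q : {f : Region3 → Fin k // ValidPatternK f}) : Prop :=
  ∃ σ : Equiv.Perm (Fin 3), ∀ S : Region3,
    q.1 ⟨S.1.image σ, S.2.image σ⟩ = p.1 S

/-- `X k`: the number of `k`h-motifs, i.e., the number of orbits of valid
`k`-ary patterns under the action of `S₃`. -/
noncomputable def numKhMotifs (k : ℕ) : ℕ :=
  Nat.card (Quot (PatternRelK (k := k)))

namespace Kh
open Equiv Finset MulAction

abbrev G3 := Equiv.Perm (Fin 3)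

def act (σ : G3) (S : Region3) : Region3 := ⟨S.1.image σ, S.2.image σ⟩

lemma mem_act {σ : G3} {S : Region3} {i : Fin 3} : i ∈ (act σ S).1 ↔ σ⁻¹ i ∈ S.1 := by
  simp only [act, Finset.mem_image]
  constructor
  · rintro ⟨x, hx, rfl⟩; simpa using hx
  · intro h; exact ⟨σ⁻¹ i, h, by simp⟩

lemma act_act (σ τ : G3) (S : Region3) : act σ (act τ S) = act (σ * τ) S := by
  apply Subtype.ext
  show (S.1.image τ).image σ = S.1.image (σ * τ)
  rw [Finset.image_image, Equiv.Perm.coe_mul]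

lemma act_one (S : Region3) : act 1 S = S := by
  apply Subtype.ext
  show S.1.image (1 : G3) = S.1
  rw [Equiv.Perm.coe_one, Finset.image_id]

lemma act_inv_left (σ : G3) (S : Region3) : act σ⁻¹ (act σ S) = S := by
  rw [act_act, inv_mul_cancel, act_one]

lemma act_inv_right (σ : G3) (S : Region3) : act σ (act σ⁻¹ S) = S := by
  rw [act_act, mul_inv_cancel, act_one]

def supp {k : ℕ} (p : Region3 → Fin k) : Finset Region3 :=
  univ.filter fun S => (p S).val ≠ 0

def Ed (A : Finset Region3) (i j : Fin 3) : Prop := ∃ S ∈ A, i ∈ S.1 ∧ j ∈ S.1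

instance (A i j) : Decidable (Ed A i j) := by unfold Ed; infer_instance

def ValidSupp (A : Finset Region3) : Prop :=
  (∀ i j : Fin 3, i ≠ j → ∃ S ∈ A, ((i ∈ S.1 ∧ j ∉ S.1) ∨ (i ∉ S.1 ∧ j ∈ S.1))) ∧
  ((Ed A 0 1 ∧ Ed A 1 2) ∨ (Ed A 0 1 ∧ Ed A 0 2) ∨ (Ed A 0 2 ∧ Ed A 1 2))

instance : DecidablePred ValidSupp := fun A => by unfold ValidSupp; infer_instance

lemma not_conn (G : SimpleGraph (Fin 3)) (v : Fin 3) (h : ∀ x, ¬ G.Adj v x) :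
    ¬ G.Connected := by
  intro hC
  have key : ∀ u, v = u := by
    intro u
    obtain ⟨w⟩ := hC.preconnected v u
    cases w with
    | nil => rfl
    | cons h' _ => exact absurd h' (h _)
  have h0 := key 0
  have h1 := key 1
  exact absurd (h0.symm.trans h1) (by decide)

lemma conn3 (G : SimpleGraph (Fin 3)) :
    G.Connected ↔
      ((G.Adj 0 1 ∧ G.Adj 1 2) ∨ (G.Adj 0 1 ∧ G.Adj 0 2) ∨ (G.Adj 0 2 ∧ G.Adj 1 2)) := by
  constructor
  · intro h
    by_contra hc
    push_neg at hc
    obtain ⟨hA, hB, hC⟩ := hc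
    by_cases h01 : G.Adj 0 1
    · have h12 := hA h01
      have h02 := hB h01
      refine not_conn G 2 ?_ h
      intro x
      fin_cases x
      · exact fun hh => h02 hh.symm
      · exact fun hh => h12 hh.symm
      · exact G.loopless.irrefl 2
    · by_cases h02 : G.Adj 0 2
      · have h12 := hC h02
        refine not_conn G 1 ?_ h
        intro x; fin_cases x
        · exact fun hh => h01 hh.symm
        · exact G.loopless.irrefl 1
        · exact h12
      · refine not_conn G 0 ?_ h
        intro x; fin_cases x
        · exact G.loopless.irrefl 0
        · exact h01
        · exact h02
  · intro h
    rw [SimpleGraph.connected_iff]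
    refine ⟨?_, ⟨0⟩⟩
    intro u v
    obtain (⟨h1, h2⟩ | ⟨h1, h2⟩ | ⟨h1, h2⟩) := h <;> fin_cases u <;> fin_cases v <;>
      first
        | exact SimpleGraph.Reachable.refl _
        | exact h1.reachable
        | exact h2.reachable
        | exact h1.reachable.symm
        | exact h2.reachable.symm
        | exact h1.reachable.trans h2.reachable
        | exact (h1.reachable.trans h2.reachable).symm
        | exact h1.reachable.symm.trans h2.reachable
        | exact (h1.reachable.symm.trans h2.reachable).symm
        | exact h1.reachable.trans h2.reachable.symm
        | exact (h1.reachable.trans h2.reachable.symm).symm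

lemma valid_iff {k : ℕ} (p : Region3 → Fin k) : ValidPatternK p ↔ ValidSupp (supp p) := by
  unfold ValidPatternK ValidSupp
  apply and_congr
  · simp only [supp, Finset.mem_filter, Finset.mem_univ, true_and]
  · rw [conn3]
    have hadj : ∀ i j : Fin 3, (patternGraphK p).Adj i j ↔ (i ≠ j ∧ Ed (supp p) i j) := by
      intro i j
      show (i ≠ j ∧ _) ↔ _
      unfold Ed
      simp only [supp, Finset.mem_filter, Finset.mem_univ, true_and]
    have e01 : (0 : Fin 3) ≠ 1 := by decide
    have e02 : (0 : Fin 3) ≠ 2 := by decide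
    have e12 : (1 : Fin 3) ≠ 2 := by decide
    simp only [hadj]
    constructor <;> intro hx <;> tauto


abbrev VPat (k : ℕ) := {f : Region3 → Fin k // ValidPatternK f}

lemma valid_smul {k : ℕ} (σ : G3) {p : Region3 → Fin k} (h : ValidPatternK p) :
    ValidPatternK (fun S => p (act σ⁻¹ S)) := by
  obtain ⟨hd, hc⟩ := h
  constructor
  · intro i j hij
    obtain ⟨S, h0, hsep⟩ := hd (σ⁻¹ i) (σ⁻¹ j) (fun e => hij (by simpa using congrArg σ e))
    refine ⟨act σ S, ?_, ?_⟩
    · show (p (act σ⁻¹ (act σ S))).val ≠ 0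
      rw [act_inv_left]; exact h0
    · rcases hsep with ⟨ha, hb⟩ | ⟨ha, hb⟩
      · exact Or.inl ⟨mem_act.mpr ha, fun hx => hb (mem_act.mp hx)⟩
      · exact Or.inr ⟨fun hx => ha (mem_act.mp hx), mem_act.mpr hb⟩
  · have iso : patternGraphK p ≃g patternGraphK (fun S => p (act σ⁻¹ S)) := by
      refine ⟨σ, ?_⟩
      intro a b
      show (σ a ≠ σ b ∧ ∃ S : Region3, (p (act σ⁻¹ S)).val ≠ 0 ∧ σ a ∈ S.1 ∧ σ b ∈ S.1) ↔
        (a ≠ b ∧ ∃ S : Region3, (p S).val ≠ 0 ∧ a ∈ S.1 ∧ b ∈ S.1)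
      constructor
      · rintro ⟨hne, S, h0, ha, hb⟩
        refine ⟨fun e => hne (congrArg σ e), act σ⁻¹ S, h0, ?_, ?_⟩
        · exact mem_act.mpr (by rw [inv_inv]; exact ha)
        · exact mem_act.mpr (by rw [inv_inv]; exact hb)
      · rintro ⟨hne, T, h0, ha, hb⟩
        refine ⟨fun e => hne (σ.injective e), act σ T, ?_, ?_, ?_⟩
        · show (p (act σ⁻¹ (act σ T))).val ≠ 0
          rw [act_inv_left]; exact h0
        · exact mem_act.mpr (by simpa using ha)
        · exact mem_act.mpr (by simpa using hb)
    exact iso.connected_iff.mp hc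

instance (k : ℕ) : SMul G3 (VPat k) :=
  ⟨fun σ x => ⟨fun S => x.1 (act σ⁻¹ S), valid_smul σ x.2⟩⟩

lemma smul_apply {k : ℕ} (σ : G3) (x : VPat k) (S : Region3) :
    (σ • x).1 S = x.1 (act σ⁻¹ S) := rfl

instance (k : ℕ) : MulAction G3 (VPat k) where
  one_smul x := Subtype.ext (funext fun S => by
    show x.1 (act (1 : G3)⁻¹ S) = x.1 S
    rw [inv_one, act_one])
  mul_smul σ τ x := Subtype.ext (funext fun S => by
    show x.1 (act (σ * τ)⁻¹ S) = x.1 (act τ⁻¹ (act σ⁻¹ S))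
    rw [act_act, mul_inv_rev])

lemma rel_iff {k : ℕ} (p q : VPat k) : PatternRelK p q ↔ ∃ σ : G3, σ • q = p := by
  unfold PatternRelK
  constructor
  · rintro ⟨σ, h⟩
    refine ⟨σ⁻¹, Subtype.ext (funext fun S => ?_)⟩
    show q.1 (act σ⁻¹⁻¹ S) = p.1 S
    rw [inv_inv]
    exact h S
  · rintro ⟨σ, h⟩
    refine ⟨σ⁻¹, fun S => ?_⟩
    exact congrFun (congrArg Subtype.val h) S

lemma card_quot_eq (k : ℕ) :
    numKhMotifs k = Nat.card (Quotient (orbitRel G3 (VPat k))) := by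
  unfold numKhMotifs
  apply Nat.card_congr
  exact Quot.congrRight fun a b =>
    (rel_iff a b).trans (MulAction.orbitRel_apply.trans MulAction.mem_orbit_iff).symm

def supp' {t k : ℕ} (q : Fin t → Fin k) : Finset (Fin t) :=
  univ.filter fun o => (q o).val ≠ 0

def Psup {t : ℕ} (g : Region3 → Fin t) (B : Finset (Fin t)) : Prop :=
  ValidSupp (univ.filter fun S => g S ∈ B)

instance {t : ℕ} (g : Region3 → Fin t) : DecidablePred (Psup g) := fun B => by
  unfold Psup; infer_instance

lemma fixed_count (k t : ℕ) (σ : G3) (e : Fin t → Region3) (g : Region3 → Fin t)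
    (hge : ∀ o, g (e o) = o)
    (heg : ∀ S, e (g S) = S ∨ e (g S) = act σ S ∨ e (g S) = act σ (act σ S))
    (hg : ∀ S, g (act σ S) = g S) :
    Nat.card (fixedBy (VPat k) σ) = Nat.card {q : Fin t → Fin k // Psup g (supp' q)} := by
  have fix_iff : ∀ x : VPat k, σ • x = x → ∀ S, x.1 (act σ S) = x.1 S := by
    intro x hx S
    have h1 := congrFun (congrArg Subtype.val hx) (act σ S)
    rw [show (σ • x).1 (act σ S) = x.1 (act σ⁻¹ (act σ S)) from rfl, act_inv_left] at h1
    exact h1.symm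
  have peg : ∀ (x : VPat k), σ • x = x → ∀ S, x.1 (e (g S)) = x.1 S := by
    intro x hx S
    rcases heg S with h | h | h
    · rw [h]
    · rw [h, fix_iff x hx]
    · rw [h, fix_iff x hx, fix_iff x hx]
  apply Nat.card_congr
  exact
    { toFun := fun x => ⟨x.1.1 ∘ e, by
        have hsupp : (univ.filter fun S => g S ∈ supp' (x.1.1 ∘ e)) = supp x.1.1 := by
          ext S
          simp only [supp, supp', Finset.mem_filter, Finset.mem_univ, true_and,
            Function.comp_apply]
          rw [peg x.1 x.2 S]
        show Psup g (supp' (x.1.1 ∘ e))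
        unfold Psup
        rw [hsupp]
        exact (valid_iff _).mp x.1.2⟩
      invFun := fun y => ⟨⟨fun S => y.1 (g S), by
          rw [valid_iff]
          have hs : supp (fun S => y.1 (g S)) = univ.filter (fun S => g S ∈ supp' y.1) := by
            ext S
            simp [supp, supp']
          rw [hs]
          exact y.2⟩, by
        show σ • _ = _
        refine Subtype.ext (funext fun S => ?_)
        show y.1 (g (act σ⁻¹ S)) = y.1 (g S)
        have h2 := hg (act σ⁻¹ S)
        rw [act_inv_right] at h2
        exact congrArg y.1 h2.symm⟩
      left_inv := fun x => Subtype.ext (Subtype.ext (funext fun S => peg x.1 x.2 S))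
      right_inv := fun y => Subtype.ext (funext fun o => by
        show y.1 (g (e o)) = y.1 o
        rw [hge]) }

lemma fin_val_zero {m : ℕ} (x : Fin (m+1)) : x.val = 0 ↔ x = 0 := by
  constructor
  · intro h; exact Fin.ext h
  · intro h; rw [h]; rfl

lemma card_supp_eq {t m : ℕ} (B : Finset (Fin t)) :
    (univ.filter fun q : Fin t → Fin (m+1) => supp' q = B).card = m ^ B.card := by
  classical
  rw [← Fintype.card_subtype]
  have e1 : {q : Fin t → Fin (m+1) // supp' q = B} ≃
      ∀ o : Fin t, {x : Fin (m+1) // ¬ x.val = 0 ↔ o ∈ B} := by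
    refine (Equiv.subtypeEquivRight ?_).trans (Equiv.subtypePiEquivPi)
    intro q
    rw [Finset.ext_iff]
    apply forall_congr'
    intro o
    simp [supp']
  rw [Fintype.card_congr e1, Fintype.card_pi]
  have e2 : ∀ o : Fin t,
      Fintype.card {x : Fin (m+1) // ¬ x.val = 0 ↔ o ∈ B} = if o ∈ B then m else 1 := by
    intro o
    by_cases h : o ∈ B
    · rw [if_pos h]
      rw [Fintype.card_congr (Equiv.subtypeEquivRight
        (q := fun x : Fin (m+1) => ¬ x = 0) (fun x => by simp [h, fin_val_zero]))]
      rw [Fintype.card_subtype_compl, Fintype.card_subtype_eq (0 : Fin (m+1)),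
        Fintype.card_fin]
      simp
    · rw [if_neg h]
      rw [Fintype.card_congr (Equiv.subtypeEquivRight
        (q := fun x : Fin (m+1) => x = 0) (fun x => by simp [h, fin_val_zero]))]
      rw [Fintype.card_subtype_eq]
  rw [Finset.prod_congr rfl (fun o _ => e2 o), Finset.prod_ite_mem,
    Finset.univ_inter, Finset.prod_const]

lemma card_psup {t : ℕ} (m : ℕ) (P : Finset (Fin t) → Prop) [DecidablePred P] :
    Nat.card {q : Fin t → Fin (m+1) // P (supp' q)} =
      ∑ B ∈ ((univ : Finset (Fin t)).powerset.filter P), m ^ B.card := by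
  classical
  rw [Nat.card_eq_fintype_card, Fintype.card_subtype]
  rw [Finset.card_eq_sum_card_fiberwise
    (f := fun q : Fin t → Fin (m+1) => supp' q)
    (t := (univ : Finset (Fin t)).powerset.filter P)
    (fun q hq => by
      rw [Finset.mem_coe, Finset.mem_filter, Finset.mem_powerset]
      exact ⟨Finset.subset_univ _, (Finset.mem_filter.mp (Finset.mem_coe.mp hq)).2⟩)]
  apply Finset.sum_congr rfl
  intro B hB
  have hPB : P B := (Finset.mem_filter.mp hB).2
  have h1 : ((univ.filter fun q : Fin t → Fin (m+1) => P (supp' q)).filter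
      fun q => supp' q = B) = univ.filter (fun q => supp' q = B) := by
    ext q
    simp only [Finset.mem_filter, Finset.mem_univ, true_and]
    constructor
    · exact fun hh => hh.2
    · exact fun hh => ⟨by rw [hh]; exact hPB, hh⟩
  rw [h1, card_supp_eq]

lemma sum_pow_card {t : ℕ} (s : Finset (Finset (Fin t))) (m : ℕ) :
    ∑ B ∈ s, m ^ B.card =
      ∑ j ∈ Finset.range (t+1), ((s.filter fun B => B.card = j).card) * m ^ j := by
  rw [← Finset.sum_fiberwise_of_maps_to
    (g := fun B : Finset (Fin t) => B.card) (t := Finset.range (t+1))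
    (fun B _ => Finset.mem_range.mpr
      (Nat.lt_succ_of_le (le_trans (Finset.card_le_univ B) (by simp))))
    (fun B => m ^ B.card)]
  apply Finset.sum_congr rfl
  intro j _
  rw [Finset.sum_congr rfl (fun B hB => by rw [(Finset.mem_filter.mp hB).2]),
    Finset.sum_const, smul_eq_mul]

def A0 : Region3 := ⟨{0}, by decide⟩
def A1 : Region3 := ⟨{1}, by decide⟩
def A2 : Region3 := ⟨{2}, by decide⟩
def A01 : Region3 := ⟨{0,1}, by decide⟩
def A02 : Region3 := ⟨{0,2}, by decide⟩
def A12 : Region3 := ⟨{1,2}, by decide⟩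
def A012 : Region3 := ⟨{0,1,2}, by decide⟩

def eId : Fin 7 → Region3 := ![A0, A1, A2, A01, A02, A12, A012]

def gId (S : Region3) : Fin 7 :=
  if S = A0 then 0 else if S = A1 then 1 else if S = A2 then 2
  else if S = A01 then 3 else if S = A02 then 4 else if S = A12 then 5 else 6

lemma FId (m : ℕ) :
    ∑ B ∈ ((univ : Finset (Fin 7)).powerset.filter (Psup gId)), m ^ B.card =
      3*m^2 + 22*m^3 + 32*m^4 + 21*m^5 + 7*m^6 + m^7 := by
  rw [sum_pow_card]
  norm_num [Finset.sum_range_succ]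
  rw [show (((univ : Finset (Finset (Fin 7))).filter (Psup gId)).filter
        fun B => B = ∅).card = 0 from by decide,
    show (((univ : Finset (Finset (Fin 7))).filter (Psup gId)).filter
        fun B => B.card = 1).card = 0 from by decide,
    show (((univ : Finset (Finset (Fin 7))).filter (Psup gId)).filter
        fun B => B.card = 2).card = 3 from by decide,
    show (((univ : Finset (Finset (Fin 7))).filter (Psup gId)).filter
        fun B => B.card = 3).card = 22 from by decide,
    show (((univ : Finset (Finset (Fin 7))).filter (Psup gId)).filter
        fun B => B.card = 4).card = 32 from by decide,
    show (((univ : Finset (Finset (Fin 7))).filter (Psup gId)).filter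
        fun B => B.card = 5).card = 21 from by decide,
    show (((univ : Finset (Finset (Fin 7))).filter (Psup gId)).filter
        fun B => B.card = 6).card = 7 from by decide,
    show (((univ : Finset (Finset (Fin 7))).filter (Psup gId)).filter
        fun B => B.card = 7).card = 1 from by decide]
  ring

def sw01 : G3 := Equiv.swap 0 1
def sw02 : G3 := Equiv.swap 0 2
def sw12 : G3 := Equiv.swap 1 2
def cy1 : G3 := Equiv.swap 0 1 * Equiv.swap 0 2
def cy2 : G3 := Equiv.swap 0 2 * Equiv.swap 0 1

def eT1 : Fin 5 → Region3 := ![A0, A2, A01, A02, A012]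
def gT1 (S : Region3) : Fin 5 :=
  if S = A0 then 0 else if S = A1 then 0 else if S = A2 then 1
  else if S = A01 then 2 else if S = A02 then 3 else if S = A12 then 3 else 4

def eT2 : Fin 5 → Region3 := ![A0, A1, A01, A02, A012]
def gT2 (S : Region3) : Fin 5 :=
  if S = A0 then 0 else if S = A2 then 0 else if S = A1 then 1
  else if S = A01 then 2 else if S = A12 then 2 else if S = A02 then 3 else 4

def eT3 : Fin 5 → Region3 := ![A0, A1, A01, A12, A012]
def gT3 (S : Region3) : Fin 5 :=
  if S = A0 then 0 else if S = A1 then 1 else if S = A2 then 1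
  else if S = A01 then 2 else if S = A02 then 2 else if S = A12 then 3 else 4

def eC : Fin 3 → Region3 := ![A0, A01, A012]
def gC (S : Region3) : Fin 3 :=
  if S = A0 then 0 else if S = A1 then 0 else if S = A2 then 0
  else if S = A012 then 2 else 1

lemma FT1 (m : ℕ) :
    ∑ B ∈ ((univ : Finset (Fin 5)).powerset.filter (Psup gT1)), m ^ B.card =
      m + 5*m^2 + 8*m^3 + 5*m^4 + m^5 := by
  rw [sum_pow_card]
  norm_num [Finset.sum_range_succ]
  rw [show (((univ : Finset (Finset (Fin 5))).filter (Psup gT1)).filter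
        fun B => B = ∅).card = 0 from by decide,
    show (((univ : Finset (Finset (Fin 5))).filter (Psup gT1)).filter
        fun B => B.card = 1).card = 1 from by decide,
    show (((univ : Finset (Finset (Fin 5))).filter (Psup gT1)).filter
        fun B => B.card = 2).card = 5 from by decide,
    show (((univ : Finset (Finset (Fin 5))).filter (Psup gT1)).filter
        fun B => B.card = 3).card = 8 from by decide,
    show (((univ : Finset (Finset (Fin 5))).filter (Psup gT1)).filter
        fun B => B.card = 4).card = 5 from by decide,
    show (((univ : Finset (Finset (Fin 5))).filter (Psup gT1)).filter
        fun B => B.card = 5).card = 1 from by decide]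
  ring

lemma FT2 (m : ℕ) :
    ∑ B ∈ ((univ : Finset (Fin 5)).powerset.filter (Psup gT2)), m ^ B.card =
      m + 5*m^2 + 8*m^3 + 5*m^4 + m^5 := by
  rw [sum_pow_card]
  norm_num [Finset.sum_range_succ]
  rw [show (((univ : Finset (Finset (Fin 5))).filter (Psup gT2)).filter
        fun B => B = ∅).card = 0 from by decide,
    show (((univ : Finset (Finset (Fin 5))).filter (Psup gT2)).filter
        fun B => B.card = 1).card = 1 from by decide,
    show (((univ : Finset (Finset (Fin 5))).filter (Psup gT2)).filter
        fun B => B.card = 2).card = 5 from by decide,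
    show (((univ : Finset (Finset (Fin 5))).filter (Psup gT2)).filter
        fun B => B.card = 3).card = 8 from by decide,
    show (((univ : Finset (Finset (Fin 5))).filter (Psup gT2)).filter
        fun B => B.card = 4).card = 5 from by decide,
    show (((univ : Finset (Finset (Fin 5))).filter (Psup gT2)).filter
        fun B => B.card = 5).card = 1 from by decide]
  ring

lemma FT3 (m : ℕ) :
    ∑ B ∈ ((univ : Finset (Fin 5)).powerset.filter (Psup gT3)), m ^ B.card =
      m + 5*m^2 + 8*m^3 + 5*m^4 + m^5 := by
  rw [sum_pow_card]
  norm_num [Finset.sum_range_succ]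
  rw [show (((univ : Finset (Finset (Fin 5))).filter (Psup gT3)).filter
        fun B => B = ∅).card = 0 from by decide,
    show (((univ : Finset (Finset (Fin 5))).filter (Psup gT3)).filter
        fun B => B.card = 1).card = 1 from by decide,
    show (((univ : Finset (Finset (Fin 5))).filter (Psup gT3)).filter
        fun B => B.card = 2).card = 5 from by decide,
    show (((univ : Finset (Finset (Fin 5))).filter (Psup gT3)).filter
        fun B => B.card = 3).card = 8 from by decide,
    show (((univ : Finset (Finset (Fin 5))).filter (Psup gT3)).filter
        fun B => B.card = 4).card = 5 from by decide,
    show (((univ : Finset (Finset (Fin 5))).filter (Psup gT3)).filter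
        fun B => B.card = 5).card = 1 from by decide]
  ring

lemma FC (m : ℕ) :
    ∑ B ∈ ((univ : Finset (Fin 3)).powerset.filter (Psup gC)), m ^ B.card =
      m + 3*m^2 + m^3 := by
  rw [sum_pow_card]
  norm_num [Finset.sum_range_succ]
  rw [show (((univ : Finset (Finset (Fin 3))).filter (Psup gC)).filter
        fun B => B = ∅).card = 0 from by decide,
    show (((univ : Finset (Finset (Fin 3))).filter (Psup gC)).filter
        fun B => B.card = 1).card = 1 from by decide,
    show (((univ : Finset (Finset (Fin 3))).filter (Psup gC)).filter
        fun B => B.card = 2).card = 3 from by decide,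
    show (((univ : Finset (Finset (Fin 3))).filter (Psup gC)).filter
        fun B => B.card = 3).card = 1 from by decide]
  ring


lemma card_psup' {t : ℕ} (k m : ℕ) (hk : k = m + 1)
    (P : Finset (Fin t) → Prop) [DecidablePred P] :
    Nat.card {q : Fin t → Fin k // P (supp' q)} =
      ∑ B ∈ ((univ : Finset (Fin t)).powerset.filter P), m ^ B.card := by
  subst hk
  exact card_psup m P

lemma main_count (m : ℕ) :
    numKhMotifs (m+2) * 6 =
      (3*(m+1)^2 + 22*(m+1)^3 + 32*(m+1)^4 + 21*(m+1)^5 + 7*(m+1)^6 + (m+1)^7)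
      + 3 * ((m+1) + 5*(m+1)^2 + 8*(m+1)^3 + 5*(m+1)^4 + (m+1)^5)
      + 2 * ((m+1) + 3*(m+1)^2 + (m+1)^3) := by
  classical
  haveI : Fintype (VPat (m+2)) := Fintype.ofFinite _
  haveI : ∀ σ : G3, Fintype (fixedBy (VPat (m+2)) σ) := fun σ => Fintype.ofFinite _
  haveI : Fintype (Quotient (orbitRel G3 (VPat (m+2)))) := Fintype.ofFinite _
  have hb := MulAction.sum_card_fixedBy_eq_card_orbits_mul_card_group G3 (VPat (m+2))
  rw [show Fintype.card G3 = 6 from by rw [Fintype.card_perm, Fintype.card_fin]; rfl] at hb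
  rw [show Fintype.card (Quotient (orbitRel G3 (VPat (m+2)))) = numKhMotifs (m+2) from by
    rw [← Nat.card_eq_fintype_card, card_quot_eq]] at hb
  have H1 : Fintype.card (fixedBy (VPat (m+2)) (1 : G3)) =
      3*(m+1)^2 + 22*(m+1)^3 + 32*(m+1)^4 + 21*(m+1)^5 + 7*(m+1)^6 + (m+1)^7 := by
    rw [← Nat.card_eq_fintype_card,
      fixed_count (m+2) 7 1 eId gId (by decide) (by decide) (by decide),
      card_psup' (m+2) (m+1) rfl (Psup gId), FId]
  have H2 : Fintype.card (fixedBy (VPat (m+2)) sw01) =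
      (m+1) + 5*(m+1)^2 + 8*(m+1)^3 + 5*(m+1)^4 + (m+1)^5 := by
    rw [← Nat.card_eq_fintype_card,
      fixed_count (m+2) 5 sw01 eT1 gT1 (by decide) (by decide) (by decide),
      card_psup' (m+2) (m+1) rfl (Psup gT1), FT1]
  have H3 : Fintype.card (fixedBy (VPat (m+2)) sw02) =
      (m+1) + 5*(m+1)^2 + 8*(m+1)^3 + 5*(m+1)^4 + (m+1)^5 := by
    rw [← Nat.card_eq_fintype_card,
      fixed_count (m+2) 5 sw02 eT2 gT2 (by decide) (by decide) (by decide),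
      card_psup' (m+2) (m+1) rfl (Psup gT2), FT2]
  have H4 : Fintype.card (fixedBy (VPat (m+2)) sw12) =
      (m+1) + 5*(m+1)^2 + 8*(m+1)^3 + 5*(m+1)^4 + (m+1)^5 := by
    rw [← Nat.card_eq_fintype_card,
      fixed_count (m+2) 5 sw12 eT3 gT3 (by decide) (by decide) (by decide),
      card_psup' (m+2) (m+1) rfl (Psup gT3), FT3]
  have H5 : Fintype.card (fixedBy (VPat (m+2)) cy1) =
      (m+1) + 3*(m+1)^2 + (m+1)^3 := by
    rw [← Nat.card_eq_fintype_card,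
      fixed_count (m+2) 3 cy1 eC gC (by decide) (by decide) (by decide),
      card_psup' (m+2) (m+1) rfl (Psup gC), FC]
  have H6 : Fintype.card (fixedBy (VPat (m+2)) cy2) =
      (m+1) + 3*(m+1)^2 + (m+1)^3 := by
    rw [← Nat.card_eq_fintype_card,
      fixed_count (m+2) 3 cy2 eC gC (by decide) (by decide) (by decide),
      card_psup' (m+2) (m+1) rfl (Psup gC), FC]
  rw [← hb]
  rw [show (univ : Finset G3) = {1, sw01, sw02, sw12, cy1, cy2} from by decide]
  rw [Finset.sum_insert (by decide), Finset.sum_insert (by decide),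
    Finset.sum_insert (by decide), Finset.sum_insert (by decide),
    Finset.sum_insert (by decide), Finset.sum_singleton]
  rw [H1, H2, H3, H4, H5, H6]
  ring

end Kh

/-- **Equation (17): the number of kh-motifs.**
For every `k ≥ 2`, `X(k) = k(k−1)(k⁵ + k⁴ + 4k³ + k² − 4k + 2)/6`; in
particular `X(2) = 26`, `X(3) = 431`, `X(4) = 3076`, `X(5) = 14190`, and
`X(6) = 49750`. -/
theorem num_kh_motifs :
    (∀ k : ℕ, 2 ≤ k →
      (numKhMotifs k : ℚ) =
        (k : ℚ) * ((k : ℚ) - 1) *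
          ((k : ℚ) ^ 5 + (k : ℚ) ^ 4 + 4 * (k : ℚ) ^ 3 + (k : ℚ) ^ 2
            - 4 * (k : ℚ) + 2) / 6)
    ∧ numKhMotifs 2 = 26 ∧ numKhMotifs 3 = 431 ∧ numKhMotifs 4 = 3076
    ∧ numKhMotifs 5 = 14190 ∧ numKhMotifs 6 = 49750 := by
  refine ⟨?_, ?_, ?_, ?_, ?_, ?_⟩
  · intro k hk
    obtain ⟨m, rfl⟩ : ∃ m, k = m + 2 := ⟨k - 2, by omega⟩
    have h := Kh.main_count m
    rw [eq_div_iff (by norm_num : (6:ℚ) ≠ 0)]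
    have hq : ((numKhMotifs (m+2) : ℚ)) * 6 = ((numKhMotifs (m+2) * 6 : ℕ) : ℚ) := by
      push_cast; ring
    rw [hq, h]
    push_cast
    ring
  · have h := Kh.main_count 0; norm_num at h; omega
  · have h := Kh.main_count 1; norm_num at h; omega
  · have h := Kh.main_count 2; norm_num at h; omega
  · have h := Kh.main_count 3; norm_num at h; omega
  · have h := Kh.main_count 4; norm_num at h; omega
end

section
/- Let R be the set of the 7 nonempty subsets of {0,1,2}. A function p : R → Bool satisfies (distinctness) for every pair i ≠ j in {0,1,2} there exists S ∈ R with p(S) = true and exactly one of i, j belonging to S, and (connectedness) the graph on {0,1,2} in which i and j (i ≠ j) are joined iff there exists S ∈ R with {i,j} ⊆ S and p(S) = true is connected, IF AND ONLY IF there exist pairwise-distinct nonempty finite sets e_0, e_1, e_2 that are connected (at least one of them intersects both of the others) such that for every S ∈ R, p(S) = true ⟺ ⋂_{i∈S} e_i ∖ ⋃_{i∉S} e_i ≠ ∅. (Exhaustivity and realizability of h-motifs: the overlapping pattern of any three connected distinct hyperedges is a valid pattern, and every valid pattern is realized by some three connected distinct hyperedges.) -/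
/-- The graph on `{0,1,2}` in which `i ≠ j` are joined iff some region `S`
with `p S = true` contains both `i` and `j`. -/
def patternGraph3 (p : Region3 → Bool) : SimpleGraph (Fin 3) where
  Adj i j := i ≠ j ∧ ∃ S : Region3, p S = true ∧ i ∈ S.1 ∧ j ∈ S.1
  symm := by
    constructor
    rintro i j ⟨hij, S, hS, hi, hj⟩
    exact ⟨hij.symm, S, hS, hj, hi⟩
  loopless := by
    constructor
    rintro i ⟨h, -⟩
    exact h rfl

/-- A pattern `p : R → Bool` is valid if it satisfies distinctness (every pair
`i ≠ j` is separated by some region `S` with `p S = true` containing exactly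
one of `i, j`) and connectedness (the associated graph on `{0,1,2}` is
connected). -/
def ValidPattern3 (p : Region3 → Bool) : Prop :=
  (∀ i j : Fin 3, i ≠ j →
    ∃ S : Region3, p S = true ∧ ((i ∈ S.1 ∧ j ∉ S.1) ∨ (i ∉ S.1 ∧ j ∈ S.1))) ∧
  (patternGraph3 p).Connected

/-- The region of three hyperedges `e 0, e 1, e 2` (finite sets of nodes)
associated with a nonempty `S ⊆ {0,1,2}`:
`⋂_{i ∈ S} e i ∖ ⋃_{i ∉ S} e i`. -/
def regionOf (e : Fin 3 → Finset ℕ) (S : Region3) : Finset ℕ :=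
  S.1.inf' S.2 e \ S.1ᶜ.sup e

/-! ### Auxiliary lemmas -/

lemma mem_inf'_iff {s : Finset (Fin 3)} (hs : s.Nonempty) (e : Fin 3 → Finset ℕ) (n : ℕ) :
    n ∈ s.inf' hs e ↔ ∀ i ∈ s, n ∈ e i := by
  constructor
  · intro h i hi
    exact (Finset.inf'_le e hi) h
  · intro h
    have : ({n} : Finset ℕ) ≤ s.inf' hs e :=
      (Finset.le_inf'_iff hs e).mpr fun i hi => Finset.singleton_subset_iff.mpr (h i hi)
    exact Finset.singleton_subset_iff.mp this

lemma mem_regionOf {e : Fin 3 → Finset ℕ} {S : Region3} {n : ℕ} :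
    n ∈ regionOf e S ↔ (∀ i ∈ S.1, n ∈ e i) ∧ ∀ i, i ∉ S.1 → n ∉ e i := by
  unfold regionOf
  rw [Finset.mem_sdiff, mem_inf'_iff S.2, Finset.mem_sup]
  simp only [Finset.mem_compl]
  constructor
  · rintro ⟨h1, h2⟩
    exact ⟨h1, fun i hi hni => h2 ⟨i, hi, hni⟩⟩
  · rintro ⟨h1, h2⟩
    exact ⟨h1, fun ⟨i, hi, hni⟩ => h2 i hi hni⟩

/-- An encoding of regions into ℕ. -/
def enc (S : Region3) : ℕ := ∑ i ∈ S.1, 2 ^ (i : ℕ)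

lemma enc_inj : Function.Injective enc := by decide

lemma nbr {G : SimpleGraph (Fin 3)} {u v : Fin 3} (h : G.Reachable u v) (huv : u ≠ v) :
    ∃ w, G.Adj u w := by
  obtain ⟨w⟩ := h
  cases w with
  | nil => exact absurd rfl huv
  | cons h _ => exact ⟨_, h⟩

lemma exists_nbr {G : SimpleGraph (Fin 3)} (h : G.Connected) (i : Fin 3) :
    ∃ w, G.Adj i w := by
  have hex : ∃ j : Fin 3, i ≠ j := by
    rcases (by decide : ∀ j : Fin 3, j = 0 ∨ j = 1 ∨ j = 2) i with rfl | rfl | rfl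
    · exact ⟨1, by decide⟩
    · exact ⟨0, by decide⟩
    · exact ⟨0, by decide⟩
  obtain ⟨j, hij⟩ := hex
  exact nbr (h.preconnected i j) hij

lemma tri {G : SimpleGraph (Fin 3)} (h : G.Connected) :
    (G.Adj 0 1 ∧ G.Adj 0 2) ∨ (G.Adj 1 0 ∧ G.Adj 1 2) ∨ (G.Adj 2 0 ∧ G.Adj 2 1) := by
  obtain ⟨j, hj⟩ := exists_nbr h 0
  have hj0 : j ≠ 0 := fun hh => G.loopless.irrefl 0 (hh ▸ hj)
  rcases (by decide : ∀ j : Fin 3, j = 0 ∨ j = 1 ∨ j = 2) j with rfl | rfl | rfl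
  · exact absurd rfl hj0
  · -- Adj 0 1
    obtain ⟨m, hm⟩ := exists_nbr h 2
    have hm2 : m ≠ 2 := fun hh => G.loopless.irrefl 2 (hh ▸ hm)
    rcases (by decide : ∀ j : Fin 3, j = 0 ∨ j = 1 ∨ j = 2) m with rfl | rfl | rfl
    · exact Or.inl ⟨hj, hm.symm⟩
    · exact Or.inr (Or.inl ⟨hj.symm, hm.symm⟩)
    · exact absurd rfl hm2
  · -- Adj 0 2
    obtain ⟨m, hm⟩ := exists_nbr h 1
    have hm1 : m ≠ 1 := fun hh => G.loopless.irrefl 1 (hh ▸ hm)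
    rcases (by decide : ∀ j : Fin 3, j = 0 ∨ j = 1 ∨ j = 2) m with rfl | rfl | rfl
    · exact Or.inl ⟨hm.symm, hj⟩
    · exact absurd rfl hm1
    · exact Or.inr (Or.inr ⟨hj.symm, hm.symm⟩)

lemma conn_of {G : SimpleGraph (Fin 3)} {x y z : Fin 3}
    (hxyz : ∀ w : Fin 3, w = x ∨ w = y ∨ w = z)
    (h1 : G.Adj x y) (h2 : G.Adj x z) : G.Connected := by
  have reach : ∀ w, G.Reachable w x := by
    intro w
    rcases hxyz w with rfl | rfl | rfl
    · exact SimpleGraph.Reachable.refl _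
    · exact h1.symm.reachable
    · exact h2.symm.reachable
  have hp : G.Preconnected := fun u v => (reach u).trans (reach v).symm
  exact SimpleGraph.Connected.mk hp

/-- The region of `n` with respect to `e`: the set of indices `k` with `n ∈ e k`. -/
lemma region_true {p : Region3 → Bool} {e : Fin 3 → Finset ℕ}
    (hpe : ∀ S : Region3, p S = true ↔ (regionOf e S).Nonempty)
    {n : ℕ} {i : Fin 3} (hi : n ∈ e i) :
    ∃ T : Region3, p T = true ∧ ∀ k, k ∈ T.1 ↔ n ∈ e k := by
  refine ⟨⟨Finset.univ.filter (fun k => n ∈ e k), ⟨i, by simp [hi]⟩⟩, ?_, ?_⟩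
  · refine (hpe _).mpr ⟨n, mem_regionOf.mpr ⟨?_, ?_⟩⟩
    · intro k hk; simpa using hk
    · intro k hk; simpa using hk
  · intro k; simp

/-- **Exhaustivity and realizability of h-motifs.**
A pattern `p : R → Bool` satisfies distinctness and connectedness if and only
if there exist pairwise-distinct nonempty finite sets `e 0, e 1, e 2` that are
connected (at least one of them intersects both of the others) such that for
every region `S`, `p S = true ↔ ⋂_{i ∈ S} e i ∖ ⋃_{i ∉ S} e i ≠ ∅`. -/
theorem h_motif_realizability (p : Region3 → Bool) :
    ValidPattern3 p ↔
      ∃ e : Fin 3 → Finset ℕ,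
        Function.Injective e ∧ (∀ i, (e i).Nonempty) ∧
        (((e 0 ∩ e 1).Nonempty ∧ (e 0 ∩ e 2).Nonempty) ∨
         ((e 1 ∩ e 0).Nonempty ∧ (e 1 ∩ e 2).Nonempty) ∨
         ((e 2 ∩ e 0).Nonempty ∧ (e 2 ∩ e 1).Nonempty)) ∧
        ∀ S : Region3, (p S = true ↔ (regionOf e S).Nonempty) := by
  constructor
  · rintro ⟨hdist, hconn⟩
    set e : Fin 3 → Finset ℕ :=
      fun i => (Finset.univ.filter (fun S : Region3 => p S = true ∧ i ∈ S.1)).image enc with he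
    have key : ∀ (T : Region3) (i : Fin 3), enc T ∈ e i ↔ p T = true ∧ i ∈ T.1 := by
      intro T i
      simp only [he, Finset.mem_image, Finset.mem_filter, Finset.mem_univ, true_and]
      constructor
      · rintro ⟨S, hS, hST⟩
        rcases enc_inj hST
        exact hS
      · intro h; exact ⟨T, h, rfl⟩
    have adjS : ∀ {i j : Fin 3}, (patternGraph3 p).Adj i j → (e i ∩ e j).Nonempty := by
      rintro i j ⟨-, S, hS, hi, hj⟩
      exact ⟨enc S, Finset.mem_inter.mpr ⟨(key S i).mpr ⟨hS, hi⟩, (key S j).mpr ⟨hS, hj⟩⟩⟩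
    have hiff : ∀ S : Region3, p S = true ↔ (regionOf e S).Nonempty := by
      intro S
      constructor
      · intro hS
        refine ⟨enc S, mem_regionOf.mpr ⟨fun i hi => (key S i).mpr ⟨hS, hi⟩, ?_⟩⟩
        intro i hi hin
        exact hi ((key S i).mp hin).2
      · rintro ⟨n, hn⟩
        obtain ⟨h1, h2⟩ := mem_regionOf.mp hn
        obtain ⟨i0, hi0⟩ := S.2
        obtain ⟨T, ⟨hT, -⟩, hTn⟩ := by
          simpa only [he, Finset.mem_image, Finset.mem_filter, Finset.mem_univ, true_and]
            using h1 i0 hi0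
        have hTS : T = S := by
          apply Subtype.ext
          ext k
          constructor
          · intro hk
            by_contra hks
            exact h2 k hks (hTn ▸ (key T k).mpr ⟨hT, hk⟩)
          · intro hk
            have := h1 k hk
            rw [← hTn] at this
            exact ((key T k).mp this).2
        exact hTS ▸ hT
    refine ⟨e, ?_, ?_, ?_, hiff⟩
    · intro i j hij
      by_contra hne
      obtain ⟨S, hS, hcase⟩ := hdist i j hne
      rcases hcase with ⟨hiS, hjS⟩ | ⟨hiS, hjS⟩
      · have h1 : enc S ∈ e i := (key S i).mpr ⟨hS, hiS⟩
        rw [hij] at h1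
        exact hjS ((key S j).mp h1).2
      · have h1 : enc S ∈ e j := (key S j).mpr ⟨hS, hjS⟩
        rw [← hij] at h1
        exact hiS ((key S i).mp h1).2
    · intro i
      obtain ⟨w, -, S, hS, hiS, -⟩ := exists_nbr hconn i
      exact ⟨enc S, (key S i).mpr ⟨hS, hiS⟩⟩
    · rcases tri hconn with ⟨a, b⟩ | ⟨a, b⟩ | ⟨a, b⟩
      · exact Or.inl ⟨adjS a, adjS b⟩
      · exact Or.inr (Or.inl ⟨adjS a, adjS b⟩)
      · exact Or.inr (Or.inr ⟨adjS a, adjS b⟩)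
  · rintro ⟨e, hinj, hne, hcon, hpe⟩
    have adj_of : ∀ {i j : Fin 3} {n : ℕ}, i ≠ j → n ∈ e i → n ∈ e j →
        (patternGraph3 p).Adj i j := by
      intro i j n hij hi hj
      obtain ⟨T, hT, hTmem⟩ := region_true hpe hi
      exact ⟨hij, T, hT, (hTmem i).mpr hi, (hTmem j).mpr hj⟩
    constructor
    · intro i j hij
      have hne' : e i ≠ e j := fun h => hij (hinj h)
      have : ∃ n, (n ∈ e i ∧ n ∉ e j) ∨ (n ∈ e j ∧ n ∉ e i) := by
        by_contra hc
        push_neg at hc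
        apply hne'
        ext n
        constructor
        · intro h
          by_contra hj
          exact hj ((hc n).1 h)
        · intro h
          by_contra hi
          exact hi ((hc n).2 h)
      obtain ⟨n, hcase⟩ := this
      rcases hcase with ⟨hni, hnj⟩ | ⟨hnj, hni⟩
      · obtain ⟨T, hT, hTmem⟩ := region_true hpe hni
        exact ⟨T, hT, Or.inl ⟨(hTmem i).mpr hni, fun h => hnj ((hTmem j).mp h)⟩⟩
      · obtain ⟨T, hT, hTmem⟩ := region_true hpe hnj
        exact ⟨T, hT, Or.inr ⟨fun h => hni ((hTmem i).mp h), (hTmem j).mpr hnj⟩⟩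
    · rcases hcon with ⟨⟨n1, h1⟩, ⟨n2, h2⟩⟩ | ⟨⟨n1, h1⟩, ⟨n2, h2⟩⟩ | ⟨⟨n1, h1⟩, ⟨n2, h2⟩⟩
      · obtain ⟨h1a, h1b⟩ := Finset.mem_inter.mp h1
        obtain ⟨h2a, h2b⟩ := Finset.mem_inter.mp h2
        exact conn_of (x := 0) (y := 1) (z := 2) (by decide)
          (adj_of (by decide) h1a h1b) (adj_of (by decide) h2a h2b)
      · obtain ⟨h1a, h1b⟩ := Finset.mem_inter.mp h1
        obtain ⟨h2a, h2b⟩ := Finset.mem_inter.mp h2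
        exact conn_of (x := 1) (y := 0) (z := 2) (by decide)
          (adj_of (by decide) h1a h1b) (adj_of (by decide) h2a h2b)
      · obtain ⟨h1a, h1b⟩ := Finset.mem_inter.mp h1
        obtain ⟨h2a, h2b⟩ := Finset.mem_inter.mp h2
        exact conn_of (x := 2) (y := 0) (z := 1) (by decide)
          (adj_of (by decide) h1a h1b) (adj_of (by decide) h2a h2b)
end
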